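/- arXiv:2009.03295 — 4 statements merged into one kernel-verified Lean document; each statement's English description precedes it below -/
import Mathlib

section
/- In any strongly connected infinite digraph D with an infinite vertex set U ⊆ V(D), D contains a star or comb attached to U and a reverse star or reverse comb attached to U sharing their attachment sets. -/
variable {V : Type*}

/-- Reachability from `a` to `b` by a directed walk staying inside the vertex set `S`. -/
def ReachIn (D : V → V → Prop) (S : Set V) (a b : V) : Prop :=
  a ∈ S ∧ b ∈ S ∧ Relation.ReflTransGen (fun x y => y ∈ S ∧ D x y) a b

/-- `C` is a strong component of the subdigraph of `D` induced on `S`. -/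
def IsSCCIn (D : V → V → Prop) (S : Set V) (C : Set V) : Prop :=
  ∃ a ∈ S, C = {b | ReachIn D S a b ∧ ReachIn D S b a}

/-- A directed ray in `D`. -/
def IsRay (D : V → V → Prop) (R : ℕ → V) : Prop :=
  Function.Injective R ∧ ∀ n, D (R n) (R (n + 1))

/-- A reverse directed ray in `D`. -/
def IsRevRay (D : V → V → Prop) (R : ℕ → V) : Prop :=
  Function.Injective R ∧ ∀ n, D (R (n + 1)) (R n)

/-- The ray `R` has a tail inside the vertex set `C`. -/
def HasTailIn (R : ℕ → V) (C : Set V) : Prop :=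
  ∃ n, ∀ m, n ≤ m → R m ∈ C

/-- A solid ray: for every finite `X` it has a tail in some strong component of `D − X`. -/
def Solid (D : V → V → Prop) (R : ℕ → V) : Prop :=
  IsRay D R ∧ ∀ X : Finset V, ∃ C, IsSCCIn D ((↑X : Set V)ᶜ) C ∧ HasTailIn R C

/-- Two solid rays are end-equivalent: for every finite `X` they have tails in the same
strong component of `D − X`. -/
def EndEquiv (D : V → V → Prop) (R R' : ℕ → V) : Prop :=
  ∀ X : Finset V, ∃ C, IsSCCIn D ((↑X : Set V)ᶜ) C ∧ HasTailIn R C ∧ HasTailIn R' C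

/-- `Ω` is an end of `D`: the class of solid rays equivalent to some solid ray. -/
def IsEnd (D : V → V → Prop) (Ω : Set (ℕ → V)) : Prop :=
  ∃ R, Solid D R ∧ Ω = {R' | Solid D R' ∧ EndEquiv D R R'}

/-- A (nonempty) directed path, recorded as its list of vertices. -/
def IsPathList (D : V → V → Prop) (l : List V) : Prop :=
  l ≠ [] ∧ l.Nodup ∧ l.Chain' D

/-- Infinitely many pairwise disjoint `A`–`B` paths in `D` (each meeting `A` precisely in its
first vertex and `B` precisely in its last vertex). -/
def DisjointPathsFrom (D : V → V → Prop) (A B : Set V) : Prop :=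
  ∃ P : ℕ → List V,
    (∀ k, IsPathList D (P k)) ∧
    (∀ j k, j ≠ k → ∀ x ∈ P j, x ∉ P k) ∧
    (∀ k, ∃ a, (P k).head? = some a ∧ a ∈ A) ∧
    (∀ k, ∃ b, (P k).getLast? = some b ∧ b ∈ B) ∧
    (∀ k, ∀ x ∈ (P k).tail, x ∉ A) ∧
    (∀ k, ∀ x ∈ (P k).dropLast, x ∉ B)

/-- A necklace in `D`: an inflated symmetric ray with finite branch sets (beads), given by its
beads together with the connecting (subdividing) paths in both directions. -/
structure Necklace (D : V → V → Prop) where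
  bead : ℕ → Set V
  fwd : ℕ → List V
  bwd : ℕ → List V
  bead_fin : ∀ n, (bead n).Finite
  bead_nonempty : ∀ n, (bead n).Nonempty
  bead_disj : ∀ m n, m ≠ n → Disjoint (bead m) (bead n)
  bead_strong : ∀ n, ∀ a ∈ bead n, ∀ b ∈ bead n, ReachIn D (bead n) a b
  fwd_path : ∀ n, IsPathList D (fwd n)
  bwd_path : ∀ n, IsPathList D (bwd n)
  fwd_head : ∀ n a, (fwd n).head? = some a → a ∈ bead n
  fwd_last : ∀ n b, (fwd n).getLast? = some b → b ∈ bead (n + 1)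
  bwd_head : ∀ n a, (bwd n).head? = some a → a ∈ bead (n + 1)
  bwd_last : ∀ n b, (bwd n).getLast? = some b → b ∈ bead n
  fwd_inner : ∀ n, ∀ x ∈ (fwd n).tail.dropLast, ∀ m, x ∉ bead m
  bwd_inner : ∀ n, ∀ x ∈ (bwd n).tail.dropLast, ∀ m, x ∉ bead m
  fwd_fwd_disj : ∀ m n, m ≠ n → ∀ x ∈ (fwd m).tail.dropLast, x ∉ (fwd n).tail.dropLast
  bwd_bwd_disj : ∀ m n, m ≠ n → ∀ x ∈ (bwd m).tail.dropLast, x ∉ (bwd n).tail.dropLast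
  fwd_bwd_disj : ∀ m n, ∀ x ∈ (fwd m).tail.dropLast, x ∉ (bwd n).tail.dropLast

/-- The vertex set of a necklace. -/
def Necklace.verts {D : V → V → Prop} (N : Necklace D) : Set V :=
  (⋃ n, N.bead n) ∪ {x | ∃ n, x ∈ N.fwd n ∨ x ∈ N.bwd n}

/-- A necklace is attached to `𝒰` if infinitely many of its beads meet every set in `𝒰`. -/
def Necklace.AttachedTo {D : V → V → Prop} (N : Necklace D) (𝒰 : Finset (Set V)) : Prop :=
  {n | ∀ U ∈ 𝒰, (N.bead n ∩ U).Nonempty}.Infinite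

/-- A necklace represents the end of the solid ray `R`: for every finite `X`, all but finitely
many beads lie in the strong component of `D − X` in which `R` has a tail. -/
def NecklaceRepresents {D : V → V → Prop} (N : Necklace D) (R : ℕ → V) : Prop :=
  ∀ X : Finset V, ∃ C, IsSCCIn D ((↑X : Set V)ᶜ) C ∧ HasTailIn R C ∧
    ∃ n₀, ∀ n, n₀ ≤ n → N.bead n ⊆ C

/-- `URankLE D 𝒰 S α`: the subdigraph of `D` induced on `S` has `𝒰`-rank at most `α`. -/
inductive URankLE (D : V → V → Prop) (𝒰 : Finset (Set V)) : Set V → Ordinal → Prop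
  | base (S : Set V) (α : Ordinal) (U : Set V) (hU : U ∈ 𝒰) (h : (U ∩ S).Finite) :
      URankLE D 𝒰 S α
  | step (S : Set V) (α : Ordinal) (X : Finset V) (r : Set V → Ordinal)
      (hr : ∀ C, IsSCCIn D (S \ ↑X) C → r C < α)
      (h : ∀ C, IsSCCIn D (S \ ↑X) C → URankLE D 𝒰 C (r C)) :
      URankLE D 𝒰 S α

/-- `D` (induced on `S`) has `𝒰`-rank exactly `α`. -/
def HasURank (D : V → V → Prop) (𝒰 : Finset (Set V)) (S : Set V) (α : Ordinal) : Prop :=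
  URankLE D 𝒰 S α ∧ ∀ β < α, ¬ URankLE D 𝒰 S β

/-- A vertex-direction of `D`. -/
def IsVertexDirection (D : V → V → Prop) (f : Finset V → Set V) : Prop :=
  (∀ X : Finset V, IsSCCIn D ((↑X : Set V)ᶜ) (f X)) ∧
  ∀ X Y : Finset V, X ⊆ Y → f Y ⊆ f X

/-- A separation `(A,B)` of `D`: `A ∪ B = V(D)` and no edge from `B∖A` to `A∖B`. -/
def IsSep (D : V → V → Prop) (A B : Set V) : Prop :=
  A ∪ B = Set.univ ∧ ∀ a ∈ B \ A, ∀ b ∈ A \ B, ¬ D a b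

/-- A finite order separation `(A,B)` points towards the vertex-direction `f`. -/
def PointsTowards (D : V → V → Prop) (f : Finset V → Set V) (A B : Set V)
    (h : (A ∩ B).Finite) : Prop :=
  f h.toFinset ⊆ B \ A

/-- A finite order separation `(A,B)` points away from the vertex-direction `f`. -/
def PointsAway (D : V → V → Prop) (f : Finset V → Set V) (A B : Set V)
    (h : (A ∩ B).Finite) : Prop :=
  f h.toFinset ⊆ A \ B

/-- The vertex `v` dominates the vertex-direction `f`. -/
def DomDir (D : V → V → Prop) (v : V) (f : Finset V → Set V) : Prop :=
  ∀ A B, IsSep D A B → ∀ h : (A ∩ B).Finite, PointsAway D f A B h → v ∈ A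

/-- An infinite `v`–`B` fan: infinitely many `v`–`B` paths meeting pairwise precisely in `v`. -/
def Fan (D : V → V → Prop) (v : V) (B : Set V) : Prop :=
  ∃ P : ℕ → List V,
    (∀ k, IsPathList D (P k)) ∧
    (∀ k, (P k).head? = some v) ∧
    (∀ k, 2 ≤ (P k).length) ∧
    (∀ k, ∃ b, (P k).getLast? = some b ∧ b ∈ B) ∧
    (∀ k, ∀ x ∈ (P k).dropLast, x ∉ B) ∧
    (∀ j k, j ≠ k → ∀ x ∈ (P j).tail, x ∉ (P k).tail)

/-- Limit edge between the ends of the solid rays `R` and `R'`. -/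
def LimitEdgeEE (D : V → V → Prop) (R R' : ℕ → V) : Prop :=
  ∀ (X : Finset V) C C', IsSCCIn D ((↑X : Set V)ᶜ) C → HasTailIn R C →
    IsSCCIn D ((↑X : Set V)ᶜ) C' → HasTailIn R' C' → C ≠ C' →
    ∃ a ∈ C, ∃ b ∈ C', D a b

/-- Limit edge from the vertex `v` to the end of the solid ray `R`. -/
def LimitEdgeVE (D : V → V → Prop) (v : V) (R : ℕ → V) : Prop :=
  ∀ (X : Finset V) C, IsSCCIn D ((↑X : Set V)ᶜ) C → HasTailIn R C → v ∉ C →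
    ∃ b ∈ C, D v b

/-- Limit edge from the end of the solid ray `R` to the vertex `v`. -/
def LimitEdgeEV (D : V → V → Prop) (R : ℕ → V) (v : V) : Prop :=
  ∀ (X : Finset V) C, IsSCCIn D ((↑X : Set V)ᶜ) C → HasTailIn R C → v ∉ C →
    ∃ a ∈ C, D a v

/-- A subdivided infinite out-star in `D` with centre `c`, given by its paths. -/
def IsStar (D : V → V → Prop) (c : V) (P : ℕ → List V) : Prop :=
  (∀ k, IsPathList D (P k)) ∧ (∀ k, (P k).head? = some c) ∧
  (∀ k, 2 ≤ (P k).length) ∧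
  (∀ j k, j ≠ k → ∀ x ∈ (P j).tail, x ∉ (P k).tail)

/-- A directed comb in `D` with spine `R`, given by its (pairwise disjoint) paths each meeting
`R` precisely in its first vertex. -/
def IsComb (D : V → V → Prop) (R : ℕ → V) (P : ℕ → List V) : Prop :=
  IsRay D R ∧ (∀ k, IsPathList D (P k)) ∧
  (∀ k, ∃ n, (P k).head? = some (R n)) ∧
  (∀ k, ∀ x ∈ (P k).tail, ∀ n, x ≠ R n) ∧
  (∀ j k, j ≠ k → ∀ x ∈ P j, x ∉ P k)

/-- A star in `D` whose `k`-th leaf is `a k`. -/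
def StarAttachedWith (D : V → V → Prop) (a : ℕ → V) : Prop :=
  ∃ c P, IsStar D c P ∧ ∀ k, (P k).getLast? = some (a k)

/-- A comb in `D` whose `k`-th tooth is `a k`. -/
def CombAttachedWith (D : V → V → Prop) (a : ℕ → V) : Prop :=
  ∃ R P, IsComb D R P ∧ ∀ k, (P k).getLast? = some (a k)

/-- `a` and `b` are consecutive entries of the list `l`. -/
def AdjInList (l : List V) (a b : V) : Prop :=
  ∃ l₁ l₂, l = l₁ ++ a :: b :: l₂

/-- The edge relation of (a subdigraph of `D` forming) the necklace `N`: all `D`-edges inside a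
bead together with the edges of the connecting paths. -/
def Necklace.edges {D : V → V → Prop} (N : Necklace D) (a b : V) : Prop :=
  D a b ∧ ((∃ n, a ∈ N.bead n ∧ b ∈ N.bead n) ∨
    (∃ n, AdjInList (N.fwd n) a b ∨ AdjInList (N.bwd n) a b))

/-- A generalized ray: a directed ray (`true`) or a reverse directed ray (`false`). -/
def IsGenRay (D : V → V → Prop) : Bool × (ℕ → V) → Prop
  | (true, R) => IsRay D R
  | (false, R) => IsRevRay D R

/-- Pre-end equivalence of generalized rays: infinitely many disjoint paths in both
directions. -/
def PreEquiv (D : V → V → Prop) (Q Q' : Bool × (ℕ → V)) : Prop :=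
  DisjointPathsFrom D (Set.range Q.2) (Set.range Q'.2) ∧
  DisjointPathsFrom D (Set.range Q'.2) (Set.range Q.2)

/-- The pre-end `γ` includes the end represented by the solid ray `R`. -/
def IncludesEnd (D : V → V → Prop) (γ : Set (Bool × (ℕ → V))) (R : ℕ → V) : Prop :=
  Solid D R ∧ ∀ R', Solid D R' → EndEquiv D R R' → (true, R') ∈ γ

/-- The set of edges of `D` from `A` to `B`. -/
def EdgesBetween (D : V → V → Prop) (A B : Set V) : Set (V × V) :=
  {e | D e.1 e.2 ∧ e.1 ∈ A ∧ e.2 ∈ B}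

/-- A bundle of `D − X`. -/
def IsBundle (D : V → V → Prop) (X : Finset V) (E : Set (V × V)) : Prop :=
  E.Nonempty ∧
  ((∃ C C', IsSCCIn D ((↑X : Set V)ᶜ) C ∧ IsSCCIn D ((↑X : Set V)ᶜ) C' ∧ C ≠ C' ∧
      E = EdgesBetween D C C') ∨
   (∃ v ∈ X, ∃ C, IsSCCIn D ((↑X : Set V)ᶜ) C ∧
      (E = EdgesBetween D {v} C ∨ E = EdgesBetween D C {v})))

/-- Compatibility `f(X) ⊇ f(Y)` between values of a direction (a strong component is regarded
as containing a bundle if it contains all its edges). -/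
def DirCompat : Set V ⊕ Set (V × V) → Set V ⊕ Set (V × V) → Prop
  | Sum.inl C, Sum.inl C' => C' ⊆ C
  | Sum.inl C, Sum.inr E' => ∀ e ∈ E', e.1 ∈ C ∧ e.2 ∈ C
  | Sum.inr _, Sum.inl _ => False
  | Sum.inr E, Sum.inr E' => E' ⊆ E

/-- A direction of `D`: maps each finite `X` to a strong component or a bundle of `D − X`,
compatibly. -/
def IsDirection (D : V → V → Prop) (f : Finset V → Set V ⊕ Set (V × V)) : Prop :=
  (∀ X : Finset V, (∃ C, IsSCCIn D ((↑X : Set V)ᶜ) C ∧ f X = Sum.inl C) ∨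
    (∃ E, IsBundle D X E ∧ f X = Sum.inr E)) ∧
  ∀ X Y : Finset V, X ⊆ Y → DirCompat (f X) (f Y)

/-- An edge-direction: a direction whose value is a bundle for some finite `X`. -/
def IsEdgeDirection (D : V → V → Prop) (f : Finset V → Set V ⊕ Set (V × V)) : Prop :=
  IsDirection D f ∧ ∃ (X : Finset V) (E : Set (V × V)), f X = Sum.inr E

/-- The three kinds of (potential) limit edges: end–end, vertex–end, end–vertex.
Ends are given as sets of (solid) rays. -/
inductive LimitEdgeObj (V : Type*) where
  | ee (Ω₁ Ω₂ : Set (ℕ → V))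
  | ve (v : V) (Ω : Set (ℕ → V))
  | ev (Ω : Set (ℕ → V)) (v : V)

/-- `l` is a limit edge of `D`. -/
def IsLimitEdge (D : V → V → Prop) : LimitEdgeObj V → Prop
  | LimitEdgeObj.ee Ω₁ Ω₂ => IsEnd D Ω₁ ∧ IsEnd D Ω₂ ∧ Ω₁ ≠ Ω₂ ∧
      ∀ R ∈ Ω₁, ∀ R' ∈ Ω₂, LimitEdgeEE D R R'
  | LimitEdgeObj.ve v Ω => IsEnd D Ω ∧ ∀ R ∈ Ω, LimitEdgeVE D v R
  | LimitEdgeObj.ev Ω v => IsEnd D Ω ∧ ∀ R ∈ Ω, LimitEdgeEV D R v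

/-- `f` agrees with the map `f_λ` for the end–end limit edge `Ω₁Ω₂`. -/
def AgreesEE (D : V → V → Prop) (Ω₁ Ω₂ : Set (ℕ → V))
    (f : Finset V → Set V ⊕ Set (V × V)) : Prop :=
  ∀ (X : Finset V), ∀ R ∈ Ω₁, ∀ R' ∈ Ω₂, ∀ C C',
    IsSCCIn D ((↑X : Set V)ᶜ) C → HasTailIn R C →
    IsSCCIn D ((↑X : Set V)ᶜ) C' → HasTailIn R' C' →
    (C = C' → f X = Sum.inl C) ∧ (C ≠ C' → f X = Sum.inr (EdgesBetween D C C'))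

/-- `f` agrees with the map `f_λ` for the vertex–end limit edge `vΩ`. -/
def AgreesVE (D : V → V → Prop) (v : V) (Ω : Set (ℕ → V))
    (f : Finset V → Set V ⊕ Set (V × V)) : Prop :=
  ∀ (X : Finset V), ∀ R ∈ Ω, ∀ C, IsSCCIn D ((↑X : Set V)ᶜ) C → HasTailIn R C →
    (v ∈ C → f X = Sum.inl C) ∧
    (v ∈ (↑X : Set V) → f X = Sum.inr (EdgesBetween D {v} C)) ∧
    (∀ C', IsSCCIn D ((↑X : Set V)ᶜ) C' → v ∈ C' → C' ≠ C →
      f X = Sum.inr (EdgesBetween D C' C))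

/-- `f` agrees with the map `f_λ` for the end–vertex limit edge `Ωv`. -/
def AgreesEV (D : V → V → Prop) (Ω : Set (ℕ → V)) (v : V)
    (f : Finset V → Set V ⊕ Set (V × V)) : Prop :=
  ∀ (X : Finset V), ∀ R ∈ Ω, ∀ C, IsSCCIn D ((↑X : Set V)ᶜ) C → HasTailIn R C →
    (v ∈ C → f X = Sum.inl C) ∧
    (v ∈ (↑X : Set V) → f X = Sum.inr (EdgesBetween D C {v})) ∧
    (∀ C', IsSCCIn D ((↑X : Set V)ᶜ) C' → v ∈ C' → C' ≠ C →
      f X = Sum.inr (EdgesBetween D C C'))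

/-- `f` agrees with `f_λ` for the limit edge `l`. -/
def Agrees (D : V → V → Prop) : LimitEdgeObj V → (Finset V → Set V ⊕ Set (V × V)) → Prop
  | LimitEdgeObj.ee Ω₁ Ω₂, f => AgreesEE D Ω₁ Ω₂ f
  | LimitEdgeObj.ve v Ω, f => AgreesVE D v Ω f
  | LimitEdgeObj.ev Ω v, f => AgreesEV D Ω v f

set_option linter.unusedSectionVars false
namespace SCLaux
variable {V : Type*}

def sphere (D : V → V → Prop) (v₀ : V) : ℕ → Set V
  | 0 => {v₀}
  | n+1 => sphere D v₀ n ∪ {v | ∃ u ∈ sphere D v₀ n, D u v}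

noncomputable def depth (D : V → V → Prop) (v₀ v : V) : ℕ := sInf {n | v ∈ sphere D v₀ n}

open Classical in
noncomputable def parent (D : V → V → Prop) (v₀ v : V) : V :=
  if h : ∃ u, D u v ∧ depth D v₀ u + 1 = depth D v₀ v then h.choose else v₀

def Anc (D : V → V → Prop) (v₀ v u : V) : Prop := ∃ k, (parent D v₀)^[k] u = v

variable {D : V → V → Prop} {v₀ : V}

lemma depth_le {v : V} {n : ℕ} (h : v ∈ sphere D v₀ n) : depth D v₀ v ≤ n := Nat.sInf_le h

lemma depth_v₀ : depth D v₀ v₀ = 0 :=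
  Nat.le_zero.1 (depth_le (by simp [sphere]))

variable (hR : ∀ v : V, ∃ n, v ∈ sphere D v₀ n)
include hR

lemma mem_sphere_depth (v : V) : v ∈ sphere D v₀ (depth D v₀ v) := Nat.sInf_mem (hR v)

lemma eq_of_depth_zero {v : V} (h : depth D v₀ v = 0) : v = v₀ := by
  have := mem_sphere_depth hR v; rw [h] at this; simpa [sphere] using this

lemma parent_spec {v : V} (h : depth D v₀ v ≠ 0) :
    D (parent D v₀ v) v ∧ depth D v₀ (parent D v₀ v) + 1 = depth D v₀ v := by
  obtain ⟨n, hn⟩ : ∃ n, depth D v₀ v = n + 1 := ⟨depth D v₀ v - 1, by omega⟩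
  have hv : v ∈ sphere D v₀ (n+1) := by rw [← hn]; exact mem_sphere_depth hR v
  have hvn : v ∉ sphere D v₀ n := fun hmem => by have := depth_le hmem; omega
  have hex : ∃ u ∈ sphere D v₀ n, D u v := by
    rcases hv with h1 | h2
    · exact absurd h1 hvn
    · exact h2
  obtain ⟨u, hu, huv⟩ := hex
  have hdu : depth D v₀ u = n := by
    have h1 : depth D v₀ u ≤ n := depth_le hu
    by_contra hne
    have h2 : depth D v₀ u < n := by omega
    have : v ∈ sphere D v₀ (depth D v₀ u + 1) :=
      Or.inr ⟨u, mem_sphere_depth hR u, huv⟩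
    have := depth_le this; omega
  have hex2 : ∃ u, D u v ∧ depth D v₀ u + 1 = depth D v₀ v := ⟨u, huv, by omega⟩
  rw [parent, dif_pos hex2]
  exact ⟨hex2.choose_spec.1, hex2.choose_spec.2⟩

lemma parent_of_depth_zero {v : V} (h : depth D v₀ v = 0) : parent D v₀ v = v₀ := by
  rw [parent, dif_neg]; rintro ⟨u, -, hu⟩; omega

lemma parent_v₀ : parent D v₀ v₀ = v₀ := parent_of_depth_zero hR depth_v₀

lemma depth_parent (v : V) : depth D v₀ (parent D v₀ v) = depth D v₀ v - 1 := by
  by_cases h : depth D v₀ v = 0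
  · rw [parent_of_depth_zero hR h, depth_v₀]; omega
  · have := (parent_spec hR h).2; omega

lemma depth_iterate {v : V} : ∀ k, k ≤ depth D v₀ v →
    depth D v₀ ((parent D v₀)^[k] v) = depth D v₀ v - k := by
  intro k
  induction k with
  | zero => simp
  | succ k ih =>
    intro hk
    rw [Function.iterate_succ_apply', depth_parent hR, ih (by omega)]; omega

lemma iterate_root (v : V) : (parent D v₀)^[depth D v₀ v] v = v₀ :=
  eq_of_depth_zero hR (by rw [depth_iterate hR _ le_rfl]; omega)

lemma iterate_of_ge {v : V} {k : ℕ} (h : depth D v₀ v ≤ k) : (parent D v₀)^[k] v = v₀ := by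
  have : k = (k - depth D v₀ v) + depth D v₀ v := by omega
  rw [this, Function.iterate_add_apply, iterate_root hR,
    Function.iterate_fixed (parent_v₀ hR)]

lemma anc_canonical {v u : V} (h : Anc D v₀ v u) :
    (parent D v₀)^[depth D v₀ u - depth D v₀ v] u = v := by
  obtain ⟨k, hk⟩ := h
  by_cases hle : k ≤ depth D v₀ u
  · have hdv : depth D v₀ v = depth D v₀ u - k := by rw [← hk, depth_iterate hR _ hle]
    have : depth D v₀ u - depth D v₀ v = k := by omega
    rw [this, hk]
  · have hv : v = v₀ := by rw [← hk, iterate_of_ge hR (by omega)]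
    rw [hv, depth_v₀]; simpa using iterate_root hR u

lemma anc_depth_le {v u : V} (h : Anc D v₀ v u) : depth D v₀ v ≤ depth D v₀ u := by
  obtain ⟨k, hk⟩ := h
  by_cases hle : k ≤ depth D v₀ u
  · rw [← hk, depth_iterate hR _ hle]; omega
  · rw [← hk, iterate_of_ge hR (by omega), depth_v₀]; omega

lemma anc_root (u : V) : Anc D v₀ v₀ u := ⟨_, iterate_root hR u⟩

lemma anc_eq_of_depth {v w u : V} (h1 : Anc D v₀ v u) (h2 : Anc D v₀ w u)
    (h3 : depth D v₀ v = depth D v₀ w) : v = w := by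
  rw [← anc_canonical hR h1, ← anc_canonical hR h2, h3]

lemma anc_of_anc {v w u : V} (h1 : Anc D v₀ v u) (h2 : Anc D v₀ w u)
    (h3 : depth D v₀ v ≤ depth D v₀ w) : Anc D v₀ v w := by
  refine ⟨depth D v₀ w - depth D v₀ v, ?_⟩
  have hw := anc_canonical hR h2
  have hv := anc_canonical hR h1
  have hwu := anc_depth_le hR h2
  have key : depth D v₀ w - depth D v₀ v + (depth D v₀ u - depth D v₀ w)
      = depth D v₀ u - depth D v₀ v := by omega
  calc (parent D v₀)^[depth D v₀ w - depth D v₀ v] w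
      = (parent D v₀)^[depth D v₀ w - depth D v₀ v]
        ((parent D v₀)^[depth D v₀ u - depth D v₀ w] u) := by rw [hw]
    _ = (parent D v₀)^[depth D v₀ w - depth D v₀ v + (depth D v₀ u - depth D v₀ w)] u :=
        (Function.iterate_add_apply _ _ _ _).symm
    _ = v := by rw [key, hv]

noncomputable def pathTo (D : V → V → Prop) (v₀ : V) (v u : V) : List V :=
  (List.range (depth D v₀ u - depth D v₀ v + 1)).map
    (fun i => (parent D v₀)^[depth D v₀ u - depth D v₀ v - i] u)

omit hR in
lemma pathTo_ne_nil (v u : V) : pathTo D v₀ v u ≠ [] := by simp [pathTo]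

lemma depth_pathTo_fun {v u : V} (h : Anc D v₀ v u) {i : ℕ}
    (hi : i ≤ depth D v₀ u - depth D v₀ v) :
    depth D v₀ ((parent D v₀)^[depth D v₀ u - depth D v₀ v - i] u) = depth D v₀ v + i := by
  have hle := anc_depth_le hR h
  rw [depth_iterate hR _ (by omega)]; omega

lemma head?_pathTo {v u : V} (h : Anc D v₀ v u) : (pathTo D v₀ v u).head? = some v := by
  rw [pathTo, List.range_succ_eq_map, List.map_cons]
  simp only [List.head?_cons, Nat.sub_zero]
  rw [anc_canonical hR h]

lemma getLast?_pathTo {v u : V} (h : Anc D v₀ v u) :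
    (pathTo D v₀ v u).getLast? = some u := by
  rw [pathTo, List.range_succ, List.map_append, List.map_singleton, List.getLast?_concat]
  simp

lemma nodup_pathTo {v u : V} (h : Anc D v₀ v u) : (pathTo D v₀ v u).Nodup := by
  refine List.Nodup.map_on ?_ List.nodup_range
  intro i hi j hj hij
  rw [List.mem_range] at hi hj
  have h1 := depth_pathTo_fun hR h (i := i) (by omega)
  have h2 := depth_pathTo_fun hR h (i := j) (by omega)
  have : depth D v₀ v + i = depth D v₀ v + j := by rw [← h1, ← h2, hij]
  omega

lemma chain'_pathTo {v u : V} (h : Anc D v₀ v u) : (pathTo D v₀ v u).Chain' D := by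
  rw [pathTo]; show List.IsChain D _; rw [List.isChain_map]
  rw [show depth D v₀ u - depth D v₀ v + 1 = (depth D v₀ u - depth D v₀ v).succ from rfl,
    List.isChain_range_succ]
  intro m hm
  set K := depth D v₀ u - depth D v₀ v with hK
  have hstep : (parent D v₀)^[K - m] u = parent D v₀ ((parent D v₀)^[K - (m+1)] u) := by
    have he : K - m = (K - (m+1)) + 1 := by omega
    rw [he, Function.iterate_succ_apply']
  rw [hstep]
  have hd : depth D v₀ ((parent D v₀)^[K - (m+1)] u) ≠ 0 := by
    rw [depth_pathTo_fun hR h (by omega)]; omega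
  exact (parent_spec hR hd).1

lemma pathList_pathTo {v u : V} (h : Anc D v₀ v u) : IsPathList D (pathTo D v₀ v u) :=
  ⟨pathTo_ne_nil v u, nodup_pathTo hR h, chain'_pathTo hR h⟩

omit hR in
lemma mem_pathTo {v u x : V} (hx : x ∈ pathTo D v₀ v u) :
    ∃ i ≤ depth D v₀ u - depth D v₀ v,
      x = (parent D v₀)^[depth D v₀ u - depth D v₀ v - i] u := by
  rw [pathTo, List.mem_map] at hx
  obtain ⟨i, hi, hxi⟩ := hx
  rw [List.mem_range] at hi
  exact ⟨i, by omega, hxi.symm⟩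

lemma anc_of_mem_pathTo {v u x : V} (h : Anc D v₀ v u) (hx : x ∈ pathTo D v₀ v u) :
    Anc D v₀ x u ∧ depth D v₀ v ≤ depth D v₀ x ∧ depth D v₀ x ≤ depth D v₀ u := by
  obtain ⟨i, hi, hxi⟩ := mem_pathTo hx
  have hd : depth D v₀ x = depth D v₀ v + i := by rw [hxi]; exact depth_pathTo_fun hR h hi
  have hle := anc_depth_le hR h
  exact ⟨⟨_, hxi.symm⟩, by omega, by omega⟩

omit hR in
lemma mem_tail_pathTo {v u x : V} (hx : x ∈ (pathTo D v₀ v u).tail) :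
    ∃ i, 1 ≤ i ∧ i ≤ depth D v₀ u - depth D v₀ v ∧
      x = (parent D v₀)^[depth D v₀ u - depth D v₀ v - i] u := by
  rw [pathTo, List.range_succ_eq_map, List.map_cons, List.tail_cons, List.map_map,
    List.mem_map] at hx
  obtain ⟨i, hi, hxi⟩ := hx
  rw [List.mem_range] at hi
  exact ⟨i + 1, by omega, by omega, by simpa [Function.comp, Nat.succ_eq_add_one] using hxi.symm⟩

lemma depth_of_mem_tail {v u x : V} (h : Anc D v₀ v u) (hx : x ∈ (pathTo D v₀ v u).tail) :
    Anc D v₀ x u ∧ depth D v₀ v < depth D v₀ x := by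
  obtain ⟨i, hi1, hi2, hxi⟩ := mem_tail_pathTo hx
  have hd : depth D v₀ x = depth D v₀ v + i := by rw [hxi]; exact depth_pathTo_fun hR h hi2
  exact ⟨⟨_, hxi.symm⟩, by omega⟩

def UvSet (D : V → V → Prop) (v₀ : V) (U : Set V) (v : V) : Set V :=
  {u ∈ U | Anc D v₀ v u}

lemma caseA (U : Set V)
    (v : V) (hvInf : (UvSet D v₀ U v).Infinite)
    (hfin : ∀ c, parent D v₀ c = v → depth D v₀ c = depth D v₀ v + 1 →
      (UvSet D v₀ U c).Finite) :
    ∃ a : ℕ → V, Function.Injective a ∧ (∀ k, a k ∈ U) ∧ StarAttachedWith D a := by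
  classical
  set child : V → V :=
    fun u => (parent D v₀)^[depth D v₀ u - depth D v₀ v - 1] u with hchilddef
  have hchild : ∀ u, u ∈ UvSet D v₀ U v → u ≠ v →
      parent D v₀ (child u) = v ∧ depth D v₀ (child u) = depth D v₀ v + 1 ∧
      Anc D v₀ (child u) u ∧ 1 ≤ depth D v₀ u - depth D v₀ v := by
    intro u hu hne
    have hanc : Anc D v₀ v u := hu.2
    have hcan := anc_canonical hR hanc
    have hle := anc_depth_le hR hanc
    have hK : 1 ≤ depth D v₀ u - depth D v₀ v := by
      rcases Nat.eq_zero_or_pos (depth D v₀ u - depth D v₀ v) with h0 | h1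
      · exfalso; rw [h0] at hcan; exact hne hcan
      · exact h1
    have hdc : depth D v₀ (child u) = depth D v₀ v + 1 := by
      show depth D v₀ ((parent D v₀)^[depth D v₀ u - depth D v₀ v - 1] u)
        = depth D v₀ v + 1
      rw [depth_iterate hR _ (by omega)]
      omega
    have hpc : parent D v₀ (child u) = v := by
      have h2 : depth D v₀ u - depth D v₀ v
          = (depth D v₀ u - depth D v₀ v - 1) + 1 := by omega
      rw [h2, Function.iterate_succ_apply'] at hcan
      exact hcan
    exact ⟨hpc, hdc, ⟨_, rfl⟩, hK⟩
  set Uex : V → Set V := fun x =>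
    if (UvSet D v₀ U (child x)).Finite then UvSet D v₀ U (child x) else ∅ with hUex
  have hUexFin : ∀ x, (Uex x).Finite := by
    intro x; rw [hUex]; dsimp only; split_ifs with h
    · exact h
    · exact Set.finite_empty
  set excl : List V → Set V := fun l => insert v (⋃ x ∈ {y | y ∈ l}, Uex x) with hexcl
  have hexclFin : ∀ l, (excl l).Finite := by
    intro l
    exact (Set.Finite.biUnion (List.finite_toSet l) (fun x _ => hUexFin x)).insert v
  have hstep : ∀ l : List V, ∃ u, u ∈ UvSet D v₀ U v ∧ u ∉ excl l := by
    intro l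
    obtain ⟨u, hu⟩ := (hvInf.diff (hexclFin l)).nonempty
    exact ⟨u, hu.1, hu.2⟩
  set g : List V → V := fun l => (hstep l).choose with hg
  set L : ℕ → List V := fun k => Nat.rec [] (fun _ ih => ih ++ [g ih]) k with hL
  set a : ℕ → V := fun k => g (L k) with ha
  have hLsucc : ∀ k, L (k + 1) = L k ++ [a k] := fun k => rfl
  have haSpec : ∀ k, a k ∈ UvSet D v₀ U v ∧ a k ∉ excl (L k) :=
    fun k => (hstep (L k)).choose_spec
  have hmemL : ∀ i k, i < k → a i ∈ L k := by
    intro i k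
    induction k with
    | zero => omega
    | succ k ih =>
      intro hik
      rw [hLsucc k]
      rcases Nat.lt_succ_iff_lt_or_eq.1 hik with h | h
      · exact List.mem_append_left _ (ih h)
      · rw [h]; exact List.mem_append_right _ (List.mem_singleton_self _)
  have haNe : ∀ k, a k ≠ v := by
    intro k hk
    exact (haSpec k).2 (by rw [hexcl]; exact Set.mem_insert_iff.2 (Or.inl hk))
  have haU : ∀ k, a k ∈ U := fun k => (haSpec k).1.1
  have haAnc : ∀ k, Anc D v₀ v (a k) := fun k => (haSpec k).1.2
  have hchildA : ∀ k, parent D v₀ (child (a k)) = v ∧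
      depth D v₀ (child (a k)) = depth D v₀ v + 1 ∧
      Anc D v₀ (child (a k)) (a k) ∧ 1 ≤ depth D v₀ (a k) - depth D v₀ v :=
    fun k => hchild (a k) (haSpec k).1 (haNe k)
  have hUexA : ∀ k, Uex (a k) = UvSet D v₀ U (child (a k)) := by
    intro k
    rw [hUex]; dsimp only
    rw [if_pos (hfin _ (hchildA k).1 (hchildA k).2.1)]
  have hnotmem : ∀ i k, i < k → a k ∉ UvSet D v₀ U (child (a i)) := by
    intro i k hik hmem
    refine (haSpec k).2 ?_
    rw [hexcl]
    refine Set.mem_insert_of_mem _ ?_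
    refine Set.mem_biUnion (hmemL i k hik) ?_
    rw [hUexA i]; exact hmem
  have hmemSelf : ∀ k, a k ∈ UvSet D v₀ U (child (a k)) :=
    fun k => ⟨haU k, (hchildA k).2.2.1⟩
  have hchildNe : ∀ i k, i ≠ k → child (a i) ≠ child (a k) := by
    have key : ∀ i k, i < k → child (a i) ≠ child (a k) := by
      intro i k hik he
      exact hnotmem i k hik (he ▸ hmemSelf k)
    intro i k hik
    rcases lt_or_gt_of_ne hik with h | h
    · exact key i k h
    · exact fun he => key k i h he.symm
  have haInj : Function.Injective a := by
    intro i k he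
    by_contra hne
    rcases lt_or_gt_of_ne hne with h | h
    · exact hnotmem i k h (he ▸ hmemSelf i)
    · exact hnotmem k i h (he.symm ▸ hmemSelf k)
  refine ⟨a, haInj, haU, v, fun k => pathTo D v₀ v (a k), ⟨?_, ?_, ?_, ?_⟩, ?_⟩
  · exact fun k => pathList_pathTo hR (haAnc k)
  · exact fun k => head?_pathTo hR (haAnc k)
  · intro k
    have hlen : (pathTo D v₀ v (a k)).length
        = depth D v₀ (a k) - depth D v₀ v + 1 := by simp [pathTo]
    rw [hlen]
    have := (hchildA k).2.2.2
    omega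
  · intro j k hjk x hxj hxk
    have hancx : ∀ m, x ∈ (pathTo D v₀ v (a m)).tail → Anc D v₀ (child (a m)) x := by
      intro m hx
      obtain ⟨i, hi1, hi2, hxi⟩ := mem_tail_pathTo hx
      refine ⟨i - 1, ?_⟩
      rw [hxi, ← Function.iterate_add_apply]
      have he : i - 1 + (depth D v₀ (a m) - depth D v₀ v - i)
          = depth D v₀ (a m) - depth D v₀ v - 1 := by omega
      rw [he]
    have h1 := hancx j hxj
    have h2 := hancx k hxk
    have := anc_eq_of_depth hR h1 h2 (by rw [(hchildA j).2.1, (hchildA k).2.1])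
    exact hchildNe j k hjk this
  · exact fun k => getLast?_pathTo hR (haAnc k)

lemma caseB [Infinite V] (U : Set V) (hU : U.Infinite)
    (hB : ∀ w, (UvSet D v₀ U w).Infinite → ∃ c, parent D v₀ c = w ∧
      depth D v₀ c = depth D v₀ w + 1 ∧ (UvSet D v₀ U c).Infinite) :
    ∃ a : ℕ → V, Function.Injective a ∧ (∀ k, a k ∈ U) ∧ CombAttachedWith D a := by
  classical
  have hU0 : (UvSet D v₀ U v₀).Infinite := by
    refine hU.mono ?_
    intro u hu
    exact ⟨hu, anc_root hR u⟩
  -- the ray, as a sequence in the subtype of vertices with infinite `Uv`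
  set step : {x : V // (UvSet D v₀ U x).Infinite} → {x : V // (UvSet D v₀ U x).Infinite} :=
    fun t => ⟨(hB t.1 t.2).choose, (hB t.1 t.2).choose_spec.2.2⟩ with hstepdef
  set r' : ℕ → {x : V // (UvSet D v₀ U x).Infinite} :=
    fun n => Nat.rec ⟨v₀, hU0⟩ (fun _ t => step t) n with hr'
  set r : ℕ → V := fun n => (r' n).1 with hrdef
  have hrsucc : ∀ n, parent D v₀ (r (n + 1)) = r n ∧
      depth D v₀ (r (n + 1)) = depth D v₀ (r n) + 1 := by
    intro n
    exact ⟨(hB (r' n).1 (r' n).2).choose_spec.1, (hB (r' n).1 (r' n).2).choose_spec.2.1⟩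
  have hrdepth : ∀ n, depth D v₀ (r n) = n := by
    intro n
    induction n with
    | zero => exact depth_v₀
    | succ n ih => rw [(hrsucc n).2, ih]
  have hredge : ∀ n, D (r n) (r (n + 1)) := by
    intro n
    have h0 : depth D v₀ (r (n + 1)) ≠ 0 := by
      have := hrdepth (n + 1); omega
    have := (parent_spec hR h0).1
    rw [(hrsucc n).1] at this
    exact this
  have hrInf : ∀ n, (UvSet D v₀ U (r n)).Infinite := fun n => (r' n).2
  -- ancestors along the ray
  have hrAnc : ∀ m n, m ≤ n → Anc D v₀ (r m) (r n) := by
    intro m n hmn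
    induction n with
    | zero =>
      have : m = 0 := by omega
      rw [this]; exact ⟨0, rfl⟩
    | succ n ih =>
      rcases Nat.lt_succ_iff_lt_or_eq.1 (Nat.lt_succ_of_le hmn) with h | h
      · obtain ⟨k, hk⟩ := ih (by omega)
        exact ⟨k + 1, by rw [Function.iterate_add_apply, Function.iterate_one, (hrsucc n).1, hk]⟩
      · rw [← h]; exact ⟨0, rfl⟩
  -- pick a vertex of `U` in the subtree at `r n`
  set pick : ℕ → V := fun n => (hrInf n).nonempty.some with hpick
  have hpickSpec : ∀ n, pick n ∈ U ∧ Anc D v₀ (r n) (pick n) :=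
    fun n => (hrInf n).nonempty.some_mem
  -- the depth thresholds
  set s : ℕ → ℕ := fun k => Nat.rec 0 (fun _ B => depth D v₀ (pick B) + 1) k with hs
  set a : ℕ → V := fun k => pick (s k) with ha
  have hssucc : ∀ k, s (k + 1) = depth D v₀ (a k) + 1 := fun k => rfl
  have haU : ∀ k, a k ∈ U := fun k => (hpickSpec (s k)).1
  have haAnc : ∀ k, Anc D v₀ (r (s k)) (a k) := fun k => (hpickSpec (s k)).2
  have hsle : ∀ k, s k ≤ depth D v₀ (a k) := by
    intro k
    have := anc_depth_le hR (haAnc k)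
    rw [hrdepth] at this
    exact this
  have hsmono : ∀ j k, j < k → s j < s k := by
    have h1 : ∀ k, s k < s (k + 1) := by
      intro k
      rw [hssucc k]
      have := hsle k
      omega
    intro j k hjk
    induction k with
    | zero => omega
    | succ k ih =>
      rcases Nat.lt_succ_iff_lt_or_eq.1 hjk with h | h
      · exact lt_trans (ih h) (h1 k)
      · rw [h]; exact h1 k
  have hdepth_lt : ∀ j k, j < k → depth D v₀ (a j) < s k := by
    intro j k hjk
    have h1 : depth D v₀ (a j) < s (j + 1) := by rw [hssucc j]; omega
    rcases Nat.lt_or_ge (j + 1) k with h | h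
    · exact lt_trans h1 (hsmono _ _ h)
    · have : j + 1 = k := by omega
      rw [← this]; exact h1
  -- the top ray-ancestor index of `a k`
  set F : ℕ → Finset ℕ := fun k => (Finset.range (depth D v₀ (a k) + 1)).filter
    (fun n => Anc D v₀ (r n) (a k)) with hF
  have hFne : ∀ k, (F k).Nonempty := by
    intro k
    refine ⟨s k, ?_⟩
    simp only [hF, Finset.mem_filter, Finset.mem_range]
    exact ⟨by have := hsle k; omega, haAnc k⟩
  set M : ℕ → ℕ := fun k => (F k).max' (hFne k) with hM
  have hMAnc : ∀ k, Anc D v₀ (r (M k)) (a k) := by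
    intro k
    have h1 := Finset.max'_mem (F k) (hFne k)
    simp only [hF, Finset.mem_filter] at h1
    exact h1.2
  have hMmax : ∀ k n, Anc D v₀ (r n) (a k) → n ≤ M k := by
    intro k n hn
    refine Finset.le_max' _ _ ?_
    simp only [hF, Finset.mem_filter, Finset.mem_range]
    have := anc_depth_le hR hn
    rw [hrdepth] at this
    exact ⟨by omega, hn⟩
  have hsM : ∀ k, s k ≤ M k := fun k => hMmax k (s k) (haAnc k)
  -- disjointness of the paths
  have hdisj : ∀ j k, j < k → ∀ x, x ∈ pathTo D v₀ (r (M j)) (a j) →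
      x ∉ pathTo D v₀ (r (M k)) (a k) := by
    intro j k hjk x hxj hxk
    have h1 := (anc_of_mem_pathTo hR (hMAnc j) hxj).2.2
    have h2 := (anc_of_mem_pathTo hR (hMAnc k) hxk).2.1
    rw [hrdepth] at h2
    have h3 := hdepth_lt j k hjk
    have h4 := hsM k
    omega
  have hdisj' : ∀ j k, j ≠ k → ∀ x, x ∈ pathTo D v₀ (r (M j)) (a j) →
      x ∉ pathTo D v₀ (r (M k)) (a k) := by
    intro j k hjk x hxj hxk
    rcases lt_or_gt_of_ne hjk with h | h
    · exact hdisj j k h x hxj hxk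
    · exact hdisj k j h x hxk hxj
  have haInj : Function.Injective a := by
    intro j k he
    by_contra hne
    rcases lt_or_gt_of_ne hne with h | h
    · have := hdepth_lt j k h
      have h2 := hsle k
      rw [he] at this
      omega
    · have := hdepth_lt k j h
      have h2 := hsle j
      rw [← he] at this
      omega
  refine ⟨a, haInj, haU, r, fun k => pathTo D v₀ (r (M k)) (a k),
    ⟨⟨?_, hredge⟩, ?_, ?_, ?_, ?_⟩, ?_⟩
  · intro m n hmn
    have : depth D v₀ (r m) = depth D v₀ (r n) := by rw [hmn]
    rw [hrdepth, hrdepth] at this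
    exact this
  · exact fun k => pathList_pathTo hR (hMAnc k)
  · exact fun k => ⟨M k, head?_pathTo hR (hMAnc k)⟩
  · intro k x hx n hxn
    obtain ⟨hxanc, hxd⟩ := depth_of_mem_tail hR (hMAnc k) hx
    rw [hrdepth] at hxd
    have : Anc D v₀ (r n) (a k) := by rw [← hxn]; exact hxanc
    have hle := hMmax k n this
    have : depth D v₀ x = n := by rw [hxn, hrdepth]
    omega
  · exact hdisj'
  · exact fun k => getLast?_pathTo hR (hMAnc k)

omit hR in
theorem one_sided (D : V → V → Prop) [Infinite V]
    (hsc : ∀ a b : V, ReachIn D Set.univ a b) (U : Set V) (hU : U.Infinite) :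
    ∃ a : ℕ → V, Function.Injective a ∧ (∀ k, a k ∈ U) ∧
      (StarAttachedWith D a ∨ CombAttachedWith D a) := by
  obtain ⟨v₀⟩ : Nonempty V := inferInstance
  have hR : ∀ v, ∃ n, v ∈ sphere D v₀ n := by
    intro v
    have h := (hsc v₀ v).2.2
    induction h with
    | refl => exact ⟨0, by simp [sphere]⟩
    | tail _ h2 ih => obtain ⟨n, hn⟩ := ih; exact ⟨n + 1, Or.inr ⟨_, hn, h2.2⟩⟩
  by_cases hcase : ∃ v, (UvSet D v₀ U v).Infinite ∧ ∀ c, parent D v₀ c = v →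
      depth D v₀ c = depth D v₀ v + 1 → (UvSet D v₀ U c).Finite
  · obtain ⟨v, h1, h2⟩ := hcase
    obtain ⟨a, ha⟩ := caseA hR U v h1 h2
    exact ⟨a, ha.1, ha.2.1, Or.inl ha.2.2⟩
  · push_neg at hcase
    obtain ⟨a, ha⟩ := caseB hR U hU (fun w hw => hcase w hw)
    exact ⟨a, ha.1, ha.2.1, Or.inr ha.2.2⟩

omit hR in
lemma star_subseq {D : V → V → Prop} {a : ℕ → V} (h : StarAttachedWith D a)
    {g : ℕ → ℕ} (hg : Function.Injective g) : StarAttachedWith D (fun k => a (g k)) := by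
  obtain ⟨c, P, ⟨h1, h2, h3, h4⟩, h5⟩ := h
  exact ⟨c, fun k => P (g k), ⟨fun k => h1 _, fun k => h2 _, fun k => h3 _,
    fun j k hjk => h4 _ _ (fun he => hjk (hg he))⟩, fun k => h5 _⟩

omit hR in
lemma comb_subseq {D : V → V → Prop} {a : ℕ → V} (h : CombAttachedWith D a)
    {g : ℕ → ℕ} (hg : Function.Injective g) : CombAttachedWith D (fun k => a (g k)) := by
  obtain ⟨R, P, ⟨h0, h1, h2, h3, h4⟩, h5⟩ := h
  exact ⟨R, fun k => P (g k), ⟨h0, fun k => h1 _, fun k => h2 _, fun k => h3 _,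
    fun j k hjk => h4 _ _ (fun he => hjk (hg he))⟩, fun k => h5 _⟩

end SCLaux


/-- Directed star–comb lemma. -/
theorem directed_star_comb_lemma (D : V → V → Prop) [Infinite V]
    (hsc : ∀ a b : V, ReachIn D Set.univ a b) (U : Set V) (hU : U.Infinite) :
    ∃ a : ℕ → V, Function.Injective a ∧ (∀ k, a k ∈ U) ∧
      (StarAttachedWith D a ∨ CombAttachedWith D a) ∧
      (StarAttachedWith (fun x y => D y x) a ∨ CombAttachedWith (fun x y => D y x) a) := by
  obtain ⟨a, haInj, haU, hfwd⟩ := SCLaux.one_sided D hsc U hU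
  have hsc' : ∀ x y : V, ReachIn (fun x y => D y x) Set.univ x y := by
    intro x y
    refine ⟨trivial, trivial, ?_⟩
    have h := (hsc y x).2.2
    have h2 : Relation.ReflTransGen
        (Function.swap fun x y => (y ∈ Set.univ ∧ D x y)) x y :=
      Relation.reflTransGen_swap.2 h
    exact Relation.ReflTransGen.mono (fun x y hxy => ⟨trivial, hxy.2⟩) _ _ h2
  have hU' : (Set.range a).Infinite := Set.infinite_range_of_injective haInj
  obtain ⟨b, hbInj, hbU, hbwd⟩ := SCLaux.one_sided (fun x y => D y x) hsc' (Set.range a) hU'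
  have hgex : ∀ k, ∃ n, a n = b k := fun k => (hbU k)
  choose g hgspec using hgex
  have hgInj : Function.Injective g := by
    intro j k he
    exact hbInj (by rw [← hgspec j, ← hgspec k, he])
  have hab : (fun k => a (g k)) = b := funext hgspec
  refine ⟨b, hbInj, fun k => by rw [← hgspec k]; exact haU _, ?_, hbwd⟩
  rcases hfwd with h | h
  · left; have := SCLaux.star_subseq h hgInj; rwa [hab] at this
  · right; have := SCLaux.comb_subseq h hgInj; rwa [hab] at this
end

section
/- Let D be a digraph and 𝒰 a finite set (of vertex sets). If D has 𝒰-rank α and H is a subdigraph of D, then H has a 𝒰-rank β ≤ α. -/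
variable {V : Type*}

private lemma reachIn_mono {D E : V → V → Prop} {S T : Set V} {a b : V}
    (hsub : ∀ a b, E a b → D a b) (hST : S ⊆ T) (h : ReachIn E S a b) :
    ReachIn D T a b := by
  obtain ⟨ha, hb, hr⟩ := h
  exact ⟨hST ha, hST hb, Relation.ReflTransGen.mono (fun x y hxy => ⟨hST hxy.1, hsub _ _ hxy.2⟩) _ _ hr⟩

private lemma urankLE_mono {D E : V → V → Prop} {𝒰 : Finset (Set V)}
    (hsub : ∀ a b, E a b → D a b) :
    ∀ {T : Set V} {α : Ordinal}, URankLE D 𝒰 T α → ∀ S ⊆ T, URankLE E 𝒰 S α := by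
  intro T α h
  induction h with
  | base T α U hU hfin =>
      intro S hS
      exact URankLE.base S α U hU (hfin.subset (Set.inter_subset_inter_right U hS))
  | step T α X r hr h ih =>
      intro S hS
      classical
      -- the big SCC of D on T \ X containing a
      set big : V → Set V := fun a =>
        {b | ReachIn D (T \ ↑X) a b ∧ ReachIn D (T \ ↑X) b a} with hbig
      set r' : Set V → Ordinal := fun C' =>
        if hC' : ∃ a ∈ S \ (↑X : Set V),
            C' = {b | ReachIn E (S \ ↑X) a b ∧ ReachIn E (S \ ↑X) b a}
        then r (big hC'.choose) else 0 with hr'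
      have hdiff : S \ (↑X : Set V) ⊆ T \ ↑X := Set.diff_subset_diff_left hS
      have key : ∀ (C' : Set V)
          (hC' : ∃ a ∈ S \ (↑X : Set V),
            C' = {b | ReachIn E (S \ ↑X) a b ∧ ReachIn E (S \ ↑X) b a}),
          IsSCCIn D (T \ ↑X) (big hC'.choose) ∧
          C' ⊆ big hC'.choose ∧ r' C' = r (big hC'.choose) := by
        intro C' hC'
        have hch := hC'.choose_spec
        obtain ⟨hmem, heq⟩ := hch
        refine ⟨⟨hC'.choose, hdiff hmem, rfl⟩, ?_, ?_⟩
        · intro b hb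
          rw [heq] at hb
          exact ⟨reachIn_mono hsub hdiff hb.1, reachIn_mono hsub hdiff hb.2⟩
        · simp only [hr', dif_pos hC']
      refine URankLE.step S α X r' ?_ ?_
      · intro C' hC'
        obtain ⟨hscc, _, hreq⟩ := key C' hC'
        rw [hreq]; exact hr _ hscc
      · intro C' hC'
        obtain ⟨hscc, hsubC, hreq⟩ := key C' hC'
        rw [hreq]
        exact ih _ hscc C' hsubC

/-- If `D` has `𝒰`-rank `α` and `H` (vertex set `S`, edge relation `E`) is a subdigraph of `D`,
then `H` has a `𝒰`-rank `β ≤ α`. -/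
theorem urank_of_subdigraph (D E : V → V → Prop) (S : Set V) (𝒰 : Finset (Set V))
    (α : Ordinal) (hsub : ∀ a b, E a b → D a b ∧ a ∈ S ∧ b ∈ S)
    (hD : HasURank D 𝒰 Set.univ α) :
    ∃ β ≤ α, HasURank E 𝒰 S β := by
  have hE : URankLE E 𝒰 S α :=
    urankLE_mono (fun a b h => (hsub a b h).1) hD.1 S (Set.subset_univ S)
  classical
  have hne : {β : Ordinal | URankLE E 𝒰 S β}.Nonempty := ⟨α, hE⟩
  set β := WellFounded.min Ordinal.lt_wf _ hne with hβ
  have hβmem : URankLE E 𝒰 S β := WellFounded.min_mem Ordinal.lt_wf _ hne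
  refine ⟨β, ?_, hβmem, ?_⟩
  · exact not_lt.1 (WellFounded.not_lt_min Ordinal.lt_wf _ hE)
  · intro γ hγ hγmem
    exact WellFounded.not_lt_min Ordinal.lt_wf _ hγmem hγ
end

section
/- If a necklace N is attached to a finite family 𝒰 of vertex sets and X is a finite set of vertices, then N − X has a strong component that is itself a necklace attached to 𝒰. -/
variable {V : Type*}

open Relation List

lemma adjInList_mem_left {l : List V} {a b : V} (h : AdjInList l a b) : a ∈ l := by
  obtain ⟨l₁, l₂, rfl⟩ := h; simp

lemma adjInList_mem_right {l : List V} {a b : V} (h : AdjInList l a b) : b ∈ l := by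
  obtain ⟨l₁, l₂, rfl⟩ := h; simp

lemma adjInList_get (l : List V) (i : ℕ) (h : i + 1 < l.length) :
    AdjInList l (l.get ⟨i, by omega⟩) (l.get ⟨i + 1, h⟩) := by
  refine ⟨l.take i, l.drop (i + 2), ?_⟩
  have h1 : l.drop i = l.get ⟨i, by omega⟩ :: l.drop (i + 1) := by
    rw [List.drop_eq_getElem_cons (by omega)]; rfl
  have h2 : l.drop (i + 1) = l.get ⟨i + 1, h⟩ :: l.drop (i + 2) := by
    rw [List.drop_eq_getElem_cons (by omega)]; rfl
  conv_lhs => rw [← List.take_append_drop i l, h1, h2]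

lemma chain'_strengthen {R R' : V → V → Prop} (l : List V) (h : l.Chain' R)
    (h2 : ∀ a b, R a b → AdjInList l a b → R' a b) : l.Chain' R' := by
  change List.IsChain R l at h; change List.IsChain R' l
  rw [List.isChain_iff_getElem] at h ⊢
  intro i hi
  exact h2 _ _ (h i hi) (adjInList_get l i (by omega))

lemma mem_split3 {l : List V} {x : V} (hx : x ∈ l) :
    l.head? = some x ∨ l.getLast? = some x ∨ x ∈ l.tail.dropLast := by
  cases l with
  | nil => cases hx
  | cons a t =>
    rcases List.mem_cons.mp hx with rfl | hxt
    · exact Or.inl rfl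
    · have ht : t ≠ [] := by rintro rfl; cases hxt
      by_cases hlast : t.getLast ht = x
      · refine Or.inr (Or.inl ?_)
        rw [List.getLast?_eq_getLast_of_ne_nil (l := a :: t) (by simp),
          List.getLast_cons ht, hlast]
      · refine Or.inr (Or.inr ?_)
        have hd := List.dropLast_append_getLast ht
        rw [← hd] at hxt
        rcases List.mem_append.mp hxt with h | h
        · simpa using h
        · simp only [List.mem_singleton] at h
          exact absurd h.symm hlast

lemma rtg_mono' {E : V → V → Prop} {S S' : Set V} (h : S ⊆ S') {a b : V}
    (hr : ReflTransGen (fun x y => y ∈ S ∧ E x y) a b) :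
    ReflTransGen (fun x y => y ∈ S' ∧ E x y) a b :=
  ReflTransGen.mono (r := fun x y => y ∈ S ∧ E x y) (p := fun x y => y ∈ S' ∧ E x y)
    (fun _ _ hxy => ⟨h hxy.1, hxy.2⟩) a b hr

lemma rtg_of_chain'_list {E : V → V → Prop} {S : Set V} :
    ∀ (l : List V), l.Chain' E → (∀ x ∈ l, x ∈ S) →
      ∀ {a b : V}, l.head? = some a → l.getLast? = some b →
      ReflTransGen (fun x y => y ∈ S ∧ E x y) a b := by
  intro l
  induction l with
  | nil => simp
  | cons c t ih =>
    intro hc hS a b ha hb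
    simp only [List.head?_cons, Option.some.injEq] at ha
    subst ha
    cases t with
    | nil =>
      simp only [List.getLast?_singleton, Option.some.injEq] at hb
      subst hb; exact ReflTransGen.refl
    | cons d t' =>
      have hcd := (List.isChain_cons_cons.mp hc).1
      have hrest : ReflTransGen (fun x y => y ∈ S ∧ E x y) d b :=
        ih (List.isChain_cons_cons.mp hc).2 (fun x hx => hS x (List.mem_cons_of_mem _ hx)) rfl
          (by rwa [List.getLast?_cons_cons] at hb)
      exact ReflTransGen.head ⟨hS d (by simp), hcd⟩ hrest

lemma rtg_mem_last {E : V → V → Prop} {S : Set V} {l : List V} (hc : l.Chain' E)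
    (hS : ∀ x ∈ l, x ∈ S) {x : V} (hx : x ∈ l) {b : V} (hb : l.getLast? = some b) :
    ReflTransGen (fun x y => y ∈ S ∧ E x y) x b := by
  obtain ⟨l₁, l₂, rfl⟩ := List.append_of_mem hx
  have hsuff : (x :: l₂).Chain' E := hc.suffix ⟨l₁, rfl⟩
  have hlast : (x :: l₂).getLast? = some b := by
    rwa [List.getLast?_append_of_ne_nil _ (by simp)] at hb
  exact rtg_of_chain'_list _ hsuff (fun y hy => hS y (List.mem_append_right l₁ hy)) rfl hlast

lemma rtg_head_mem {E : V → V → Prop} {S : Set V} {l : List V} (hc : l.Chain' E)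
    (hS : ∀ x ∈ l, x ∈ S) {a : V} (ha : l.head? = some a) {x : V} (hx : x ∈ l) :
    ReflTransGen (fun x y => y ∈ S ∧ E x y) a x := by
  obtain ⟨l₁, l₂, rfl⟩ := List.append_of_mem hx
  have hpre : (l₁ ++ [x]).Chain' E := hc.prefix ⟨l₂, by simp⟩
  have hhead : (l₁ ++ [x]).head? = some a := by
    cases l₁ with
    | nil => simpa using ha
    | cons c t =>
      rw [List.cons_append, List.head?_cons] at ha ⊢
      exact ha
  exact rtg_of_chain'_list _ hpre
    (fun y hy => hS y (by simp [List.mem_append] at hy ⊢; tauto)) hhead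
    List.getLast?_concat

lemma rtg_restrict {E : V → V → Prop} {S C : Set V} (hSC : S ⊆ C) {a b : V} (ha : a ∈ C)
    (h : ReflTransGen (fun x y => y ∈ S ∧ E x y) a b) :
    ReflTransGen (fun x y => y ∈ S ∧ (E x y ∧ x ∈ C ∧ y ∈ C)) a b := by
  induction h using Relation.ReflTransGen.head_induction_on with
  | refl => exact ReflTransGen.refl
  | head hstep _ ih =>
    exact ReflTransGen.head ⟨hstep.1, hstep.2, ha, hSC hstep.1⟩ (ih (hSC hstep.1))

section NeckLemmas

variable {D : V → V → Prop} (N : Necklace D)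

/-- The "level(s)" of a vertex in a necklace. -/
def NLev (N : Necklace D) (x : V) (n : ℕ) : Prop :=
  x ∈ N.bead n ∨ x ∈ N.fwd n ∨ x ∈ N.bwd n

lemma Necklace.bead_eq {x : V} {m n : ℕ} (hm : x ∈ N.bead m) (hn : x ∈ N.bead n) : m = n := by
  by_contra h
  exact Set.disjoint_left.mp (N.bead_disj m n h) hm hn

lemma nlev_of_bead {x : V} {m : ℕ} (hx : x ∈ N.bead m) {k : ℕ} (hk : NLev N x k) :
    k = m ∨ k + 1 = m := by
  rcases hk with h | h | h
  · exact Or.inl (N.bead_eq h hx)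
  · rcases mem_split3 h with h' | h' | h'
    · exact Or.inl (N.bead_eq (N.fwd_head _ _ h') hx)
    · exact Or.inr (N.bead_eq (N.fwd_last _ _ h') hx)
    · exact absurd hx (N.fwd_inner _ _ h' m)
  · rcases mem_split3 h with h' | h' | h'
    · exact Or.inr (N.bead_eq (N.bwd_head _ _ h') hx)
    · exact Or.inl (N.bead_eq (N.bwd_last _ _ h') hx)
    · exact absurd hx (N.bwd_inner _ _ h' m)

lemma nlev_of_inner_fwd {x : V} {n : ℕ} (hx : x ∈ (N.fwd n).tail.dropLast) {k : ℕ}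
    (hk : NLev N x k) : k = n := by
  rcases hk with h | h | h
  · exact absurd h (N.fwd_inner _ _ hx k)
  · rcases mem_split3 h with h' | h' | h'
    · exact absurd (N.fwd_head _ _ h') (N.fwd_inner _ _ hx k)
    · exact absurd (N.fwd_last _ _ h') (N.fwd_inner _ _ hx (k + 1))
    · by_contra hne
      exact N.fwd_fwd_disj n k (fun h => hne h.symm) x hx h'
  · rcases mem_split3 h with h' | h' | h'
    · exact absurd (N.bwd_head _ _ h') (N.fwd_inner _ _ hx (k + 1))
    · exact absurd (N.bwd_last _ _ h') (N.fwd_inner _ _ hx k)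
    · exact absurd h' (N.fwd_bwd_disj n k x hx)

lemma nlev_of_inner_bwd {x : V} {n : ℕ} (hx : x ∈ (N.bwd n).tail.dropLast) {k : ℕ}
    (hk : NLev N x k) : k = n := by
  rcases hk with h | h | h
  · exact absurd h (N.bwd_inner _ _ hx k)
  · rcases mem_split3 h with h' | h' | h'
    · exact absurd (N.fwd_head _ _ h') (N.bwd_inner _ _ hx k)
    · exact absurd (N.fwd_last _ _ h') (N.bwd_inner _ _ hx (k + 1))
    · exact absurd hx (N.fwd_bwd_disj k n x h')
  · rcases mem_split3 h with h' | h' | h'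
    · exact absurd (N.bwd_head _ _ h') (N.bwd_inner _ _ hx (k + 1))
    · exact absurd (N.bwd_last _ _ h') (N.bwd_inner _ _ hx k)
    · by_contra hne
      exact N.bwd_bwd_disj n k (fun h => hne h.symm) x hx h'

lemma nlev_bound (x : V) : ∃ b : ℕ, ∀ k, NLev N x k → k ≤ b := by
  by_cases h1 : ∃ m, x ∈ N.bead m
  · obtain ⟨m, hm⟩ := h1
    exact ⟨m, fun k hk => by rcases nlev_of_bead N hm hk with rfl | h <;> omega⟩
  by_cases h2 : ∃ n, x ∈ (N.fwd n).tail.dropLast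
  · obtain ⟨n, hn⟩ := h2
    exact ⟨n, fun k hk => le_of_eq (nlev_of_inner_fwd N hn hk)⟩
  by_cases h3 : ∃ n, x ∈ (N.bwd n).tail.dropLast
  · obtain ⟨n, hn⟩ := h3
    exact ⟨n, fun k hk => le_of_eq (nlev_of_inner_bwd N hn hk)⟩
  refine ⟨0, fun k hk => ?_⟩
  exfalso
  rcases hk with h | h | h
  · exact h1 ⟨k, h⟩
  · rcases mem_split3 h with h' | h' | h'
    · exact h1 ⟨k, N.fwd_head _ _ h'⟩
    · exact h1 ⟨k + 1, N.fwd_last _ _ h'⟩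
    · exact h2 ⟨k, h'⟩
  · rcases mem_split3 h with h' | h' | h'
    · exact h1 ⟨k + 1, N.bwd_head _ _ h'⟩
    · exact h1 ⟨k, N.bwd_last _ _ h'⟩
    · exact h3 ⟨k, h'⟩

lemma Necklace.chain_fwd (n : ℕ) : (N.fwd n).Chain' N.edges :=
  chain'_strengthen _ (N.fwd_path n).2.2
    (fun _ _ hD hadj => ⟨hD, Or.inr ⟨n, Or.inl hadj⟩⟩)

lemma Necklace.chain_bwd (n : ℕ) : (N.bwd n).Chain' N.edges :=
  chain'_strengthen _ (N.bwd_path n).2.2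
    (fun _ _ hD hadj => ⟨hD, Or.inr ⟨n, Or.inr hadj⟩⟩)

lemma bead_rtg (m : ℕ) {S : Set V} (hS : ∀ x ∈ N.bead m, x ∈ S) {a b : V}
    (ha : a ∈ N.bead m) (hb : b ∈ N.bead m) :
    Relation.ReflTransGen (fun x y => y ∈ S ∧ N.edges x y) a b := by
  obtain ⟨-, -, hr⟩ := N.bead_strong m a ha b hb
  have H : ∀ x, Relation.ReflTransGen (fun x y => y ∈ N.bead m ∧ D x y) x b →
      x ∈ N.bead m → Relation.ReflTransGen (fun x y => y ∈ S ∧ N.edges x y) x b := by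
    intro x hx
    induction hx using Relation.ReflTransGen.head_induction_on with
    | refl => intro _; exact Relation.ReflTransGen.refl
    | head hstep _ ih =>
      intro hxm
      exact Relation.ReflTransGen.head
        ⟨hS _ hstep.1, hstep.2, Or.inl ⟨m, hxm, hstep.1⟩⟩ (ih hstep.1)
  exact H a hr ha

lemma bead_reach_in (m : ℕ) {C' : Set V} (hC : ∀ x ∈ N.bead m, x ∈ C') {a b : V}
    (ha : a ∈ N.bead m) (hb : b ∈ N.bead m) :
    ReachIn (fun a b => N.edges a b ∧ a ∈ C' ∧ b ∈ C') (N.bead m) a b := by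
  refine ⟨ha, hb, ?_⟩
  obtain ⟨-, -, hr⟩ := N.bead_strong m a ha b hb
  have H : ∀ x, Relation.ReflTransGen (fun x y => y ∈ N.bead m ∧ D x y) x b →
      x ∈ N.bead m →
      Relation.ReflTransGen
        (fun x y => y ∈ N.bead m ∧ (N.edges x y ∧ x ∈ C' ∧ y ∈ C')) x b := by
    intro x hx
    induction hx using Relation.ReflTransGen.head_induction_on with
    | refl => intro _; exact Relation.ReflTransGen.refl
    | head hstep _ ih =>
      intro hxm
      exact Relation.ReflTransGen.head
        ⟨hstep.1, ⟨hstep.2, Or.inl ⟨m, hxm, hstep.1⟩⟩, hC _ hxm, hC _ hstep.1⟩ (ih hstep.1)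
  exact H a hr ha

lemma necklace_updown {S : Set V} {n₀ B : ℕ} {a₀ : V} (ha₀ : a₀ ∈ N.bead n₀)
    (hbead : ∀ n, n₀ ≤ n → n ≤ B → ∀ x ∈ N.bead n, x ∈ S)
    (hfwd : ∀ n, n₀ ≤ n → n < B → ∀ x ∈ N.fwd n, x ∈ S)
    (hbwd : ∀ n, n₀ ≤ n → n < B → ∀ x ∈ N.bwd n, x ∈ S) :
    ∀ n, n₀ ≤ n → n ≤ B → ∀ b ∈ N.bead n,
      Relation.ReflTransGen (fun x y => y ∈ S ∧ N.edges x y) a₀ b ∧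
      Relation.ReflTransGen (fun x y => y ∈ S ∧ N.edges x y) b a₀ := by
  intro n hn
  induction n, hn using Nat.le_induction with
  | base =>
    intro hB b hb
    exact ⟨bead_rtg N n₀ (hbead n₀ le_rfl hB) ha₀ hb,
           bead_rtg N n₀ (hbead n₀ le_rfl hB) hb ha₀⟩
  | succ n hn ih =>
    intro hB b hb
    have hnB : n ≤ B := by omega
    have hnB' : n < B := by omega
    obtain ⟨hfne, -, -⟩ := N.fwd_path n
    obtain ⟨hbne, -, -⟩ := N.bwd_path n
    have hfhd : (N.fwd n).head? = some ((N.fwd n).head hfne) := List.head?_eq_head hfne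
    have hflt : (N.fwd n).getLast? = some ((N.fwd n).getLast hfne) :=
      List.getLast?_eq_getLast_of_ne_nil hfne
    have hbhd : (N.bwd n).head? = some ((N.bwd n).head hbne) := List.head?_eq_head hbne
    have hblt : (N.bwd n).getLast? = some ((N.bwd n).getLast hbne) :=
      List.getLast?_eq_getLast_of_ne_nil hbne
    have hfh : (N.fwd n).head hfne ∈ N.bead n := N.fwd_head n _ hfhd
    have hfl : (N.fwd n).getLast hfne ∈ N.bead (n + 1) := N.fwd_last n _ hflt
    have hbh : (N.bwd n).head hbne ∈ N.bead (n + 1) := N.bwd_head n _ hbhd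
    have hbl : (N.bwd n).getLast hbne ∈ N.bead n := N.bwd_last n _ hblt
    constructor
    · have h1 := (ih hnB _ hfh).1
      have h2 := rtg_of_chain'_list _ (N.chain_fwd n) (hfwd n hn hnB') hfhd hflt
      have h3 := bead_rtg N (n + 1) (hbead (n + 1) (by omega) hB) hfl hb
      exact (h1.trans h2).trans h3
    · have h1 := bead_rtg N (n + 1) (hbead (n + 1) (by omega) hB) hb hbh
      have h2 := rtg_of_chain'_list _ (N.chain_bwd n) (hbwd n hn hnB') hbhd hblt
      have h3 := (ih hnB _ hbl).2
      exact (h1.trans h2).trans h3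

lemma necklace_path_reach {S : Set V} {n₀ B : ℕ} {a₀ : V} (ha₀ : a₀ ∈ N.bead n₀)
    (hbead : ∀ n, n₀ ≤ n → n ≤ B → ∀ x ∈ N.bead n, x ∈ S)
    (hfwd : ∀ n, n₀ ≤ n → n < B → ∀ x ∈ N.fwd n, x ∈ S)
    (hbwd : ∀ n, n₀ ≤ n → n < B → ∀ x ∈ N.bwd n, x ∈ S) :
    ∀ n, n₀ ≤ n → n < B → ∀ x, (x ∈ N.fwd n ∨ x ∈ N.bwd n) →
      Relation.ReflTransGen (fun x y => y ∈ S ∧ N.edges x y) a₀ x ∧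
      Relation.ReflTransGen (fun x y => y ∈ S ∧ N.edges x y) x a₀ := by
  intro n hn hnB x hx
  have hud := necklace_updown N ha₀ hbead hfwd hbwd
  rcases hx with hx | hx
  · obtain ⟨hfne, -, -⟩ := N.fwd_path n
    have hfhd : (N.fwd n).head? = some ((N.fwd n).head hfne) := List.head?_eq_head hfne
    have hflt : (N.fwd n).getLast? = some ((N.fwd n).getLast hfne) :=
      List.getLast?_eq_getLast_of_ne_nil hfne
    have hfh : (N.fwd n).head hfne ∈ N.bead n := N.fwd_head n _ hfhd
    have hfl : (N.fwd n).getLast hfne ∈ N.bead (n + 1) := N.fwd_last n _ hflt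
    constructor
    · exact ((hud n hn (by omega) _ hfh).1).trans
        (rtg_head_mem (N.chain_fwd n) (hfwd n hn hnB) hfhd hx)
    · exact (rtg_mem_last (N.chain_fwd n) (hfwd n hn hnB) hx hflt).trans
        ((hud (n + 1) (by omega) (by omega) _ hfl).2)
  · obtain ⟨hbne, -, -⟩ := N.bwd_path n
    have hbhd : (N.bwd n).head? = some ((N.bwd n).head hbne) := List.head?_eq_head hbne
    have hblt : (N.bwd n).getLast? = some ((N.bwd n).getLast hbne) :=
      List.getLast?_eq_getLast_of_ne_nil hbne
    have hbh : (N.bwd n).head hbne ∈ N.bead (n + 1) := N.bwd_head n _ hbhd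
    have hbl : (N.bwd n).getLast hbne ∈ N.bead n := N.bwd_last n _ hblt
    constructor
    · exact ((hud (n + 1) (by omega) (by omega) _ hbh).1).trans
        (rtg_head_mem (N.chain_bwd n) (hbwd n hn hnB) hbhd hx)
    · exact (rtg_mem_last (N.chain_bwd n) (hbwd n hn hnB) hx hblt).trans
        ((hud n hn (by omega) _ hbl).2)

end NeckLemmas


lemma rtg_lev_mono {D : V → V → Prop} (N : Necklace D) {C' : Set V} {m m' : ℕ} (h : m ≤ m')
    {a b : V}
    (hr : Relation.ReflTransGen
      (fun x y => y ∈ C' ∩ {z | ∃ k, k ≤ m ∧ NLev N z k} ∧ N.edges x y) a b) :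
    Relation.ReflTransGen
      (fun x y => y ∈ C' ∩ {z | ∃ k, k ≤ m' ∧ NLev N z k} ∧ N.edges x y) a b := by
  refine rtg_mono' ?_ hr
  rintro z ⟨h1, k, hk, hlev⟩
  exact ⟨h1, k, le_trans hk h, hlev⟩

/-- Deleting finitely many vertices from a necklace attached to `𝒰` leaves a strong component
that is itself a necklace attached to `𝒰`. -/
theorem necklace_delete_finite (D : V → V → Prop) (N : Necklace D) (𝒰 : Finset (Set V))
    (hN : N.AttachedTo 𝒰) (X : Finset V) :
    ∃ C, IsSCCIn N.edges ((↑X : Set V)ᶜ) C ∧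
      ∃ M : Necklace (fun a b => N.edges a b ∧ a ∈ C ∧ b ∈ C),
        M.verts = C ∧ M.AttachedTo 𝒰 := by
  classical
  choose blev hblev using fun x => nlev_bound N x
  set n₀ : ℕ := X.sup blev + 1 with hn₀def
  have hXdisj : ∀ n, n₀ ≤ n → ∀ x : V, NLev N x n → x ∉ (X : Set V) := by
    intro n hn x hx hxX
    have h1 : n ≤ blev x := hblev x n hx
    have h2 : blev x ≤ X.sup blev := Finset.le_sup (Finset.mem_coe.mp hxX)
    omega
  obtain ⟨a₀, ha₀⟩ := N.bead_nonempty n₀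
  set Xc : Set V := ((X : Set V))ᶜ with hXcdef
  have hXcmem : ∀ n, n₀ ≤ n → ∀ x : V, NLev N x n → x ∈ Xc :=
    fun n hn x hx => hXdisj n hn x hx
  have ha₀X : a₀ ∈ Xc := hXcmem n₀ le_rfl a₀ (Or.inl ha₀)
  set C : Set V := {b | ReachIn N.edges Xc a₀ b ∧ ReachIn N.edges Xc b a₀} with hCdef
  have hmemC : ∀ u, u ∈ Xc →
      Relation.ReflTransGen (fun x y => y ∈ Xc ∧ N.edges x y) a₀ u →
      Relation.ReflTransGen (fun x y => y ∈ Xc ∧ N.edges x y) u a₀ → u ∈ C :=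
    fun u hu h1 h2 => ⟨⟨ha₀X, hu, h1⟩, ⟨hu, ha₀X, h2⟩⟩
  have ha₀C : a₀ ∈ C := hmemC a₀ ha₀X Relation.ReflTransGen.refl Relation.ReflTransGen.refl
  have hG : ∀ n, n₀ ≤ n → ∀ b ∈ N.bead n,
      Relation.ReflTransGen (fun x y => y ∈ Xc ∧ N.edges x y) a₀ b ∧
      Relation.ReflTransGen (fun x y => y ∈ Xc ∧ N.edges x y) b a₀ := by
    intro n hn
    exact necklace_updown N (B := n) ha₀
      (fun m hm _ x hx => hXcmem m hm x (Or.inl hx))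
      (fun m hm _ x hx => hXcmem m hm x (Or.inr (Or.inl hx)))
      (fun m hm _ x hx => hXcmem m hm x (Or.inr (Or.inr hx)))
      n hn le_rfl
  have hGbead : ∀ n, n₀ ≤ n → ∀ x ∈ N.bead n, x ∈ C := fun n hn x hx =>
    hmemC x (hXcmem n hn x (Or.inl hx)) (hG n hn x hx).1 (hG n hn x hx).2
  have hGpath : ∀ n, n₀ ≤ n → ∀ x, (x ∈ N.fwd n ∨ x ∈ N.bwd n) → x ∈ C := by
    intro n hn x hx
    have h := necklace_path_reach N (B := n + 1) ha₀
      (fun m hm _ y hy => hXcmem m hm y (Or.inl hy))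
      (fun m hm _ y hy => hXcmem m hm y (Or.inr (Or.inl hy)))
      (fun m hm _ y hy => hXcmem m hm y (Or.inr (Or.inr hy)))
      n hn (by omega) x hx
    have hxXc : x ∈ Xc := by
      rcases hx with hx | hx
      · exact hXcmem n hn x (Or.inr (Or.inl hx))
      · exact hXcmem n hn x (Or.inr (Or.inr hx))
    exact hmemC x hxXc h.1 h.2
  have haslev : ∀ u ∈ C, ∃ k, NLev N u k := by
    intro u hu
    rcases Relation.ReflTransGen.cases_tail hu.1.2.2 with h | ⟨c, -, hc⟩
    · exact h ▸ ⟨n₀, Or.inl ha₀⟩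
    · rcases hc.2.2 with ⟨n, -, h2⟩ | ⟨n, h | h⟩
      · exact ⟨n, Or.inl h2⟩
      · exact ⟨n, Or.inr (Or.inl (adjInList_mem_right h))⟩
      · exact ⟨n, Or.inr (Or.inr (adjInList_mem_right h))⟩
  have walk_low : ∀ v, v ∈ C → ∀ u, u ∈ C →
      Relation.ReflTransGen (fun x y => y ∈ Xc ∧ N.edges x y) u v →
      ∃ m, Relation.ReflTransGen
        (fun x y => y ∈ C ∩ {z | ∃ k, k ≤ m ∧ NLev N z k} ∧ N.edges x y) u v := by
    intro v hv u hu hw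
    have H : ∀ u, Relation.ReflTransGen (fun x y => y ∈ Xc ∧ N.edges x y) u v → u ∈ C →
        ∃ m, Relation.ReflTransGen
          (fun x y => y ∈ C ∩ {z | ∃ k, k ≤ m ∧ NLev N z k} ∧ N.edges x y) u v := by
      intro u hw
      induction hw using Relation.ReflTransGen.head_induction_on with
      | refl => exact fun _ => ⟨0, Relation.ReflTransGen.refl⟩
      | @head x w hstep hrest ih =>
        intro hxC
        have hwC : w ∈ C :=
          hmemC w hstep.1 (hxC.1.2.2.tail hstep) (hrest.trans hv.2.2.2)
        obtain ⟨m, hm⟩ := ih hwC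
        obtain ⟨k, hk⟩ := haslev w hwC
        refine ⟨max m k, Relation.ReflTransGen.head
          ⟨⟨hwC, k, le_max_right m k, hk⟩, hstep.2⟩ ?_⟩
        exact rtg_lev_mono N (le_max_left m k) hm
    exact H u hw hu
  set K : Set V := C ∩ {x | ∃ k, k < n₀ ∧ NLev N x k} with hKdef
  have hKfin : K.Finite := by
    have hsub : K ⊆ ⋃ k ∈ Set.Iio n₀,
        (N.bead k ∪ {x | x ∈ N.fwd k} ∪ {x | x ∈ N.bwd k}) := by
      rintro x ⟨-, k, hk, hlev⟩
      refine Set.mem_biUnion hk ?_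
      simp only [Set.mem_union, Set.mem_setOf_eq]
      rcases hlev with h | h | h
      · exact Or.inl (Or.inl h)
      · exact Or.inl (Or.inr h)
      · exact Or.inr h
    refine Set.Finite.subset (Set.Finite.biUnion (Set.finite_Iio n₀) fun k _ => ?_) hsub
    exact ((N.bead_fin k).union (List.finite_toSet _)).union (List.finite_toSet _)
  have uniform : ∃ m, ∀ u ∈ K,
      Relation.ReflTransGen
        (fun x y => y ∈ C ∩ {z | ∃ k, k ≤ m ∧ NLev N z k} ∧ N.edges x y) u a₀ ∧
      Relation.ReflTransGen
        (fun x y => y ∈ C ∩ {z | ∃ k, k ≤ m ∧ NLev N z k} ∧ N.edges x y) a₀ u := by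
    refine Set.Finite.induction_on_subset _ hKfin ⟨0, fun u hu => absurd hu (Set.notMem_empty u)⟩ ?_
    rintro a s haK - - ⟨m₃, hm₃⟩
    have haC : a ∈ C := haK.1
    obtain ⟨m₁, hm₁⟩ := walk_low a₀ ha₀C a haC haC.2.2.2
    obtain ⟨m₂, hm₂⟩ := walk_low a haC a₀ ha₀C haC.1.2.2
    refine ⟨max (max m₁ m₂) m₃, ?_⟩
    rintro u (rfl | hus)
    · exact ⟨rtg_lev_mono N (by omega) hm₁, rtg_lev_mono N (by omega) hm₂⟩
    · exact ⟨rtg_lev_mono N (by omega) (hm₃ u hus).1,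
        rtg_lev_mono N (by omega) (hm₃ u hus).2⟩
  obtain ⟨mK, hmK⟩ := uniform
  set n₁ : ℕ := max mK n₀ + 1 with hn₁def
  have hn₀n₁ : n₀ ≤ n₁ := by
    have := le_max_right mK n₀; omega
  have hmKn₁ : mK < n₁ := by
    have := le_max_left mK n₀; omega
  set Rem : Set V := {x | (∃ n, n₁ < n ∧ x ∈ N.bead n) ∨
      (∃ n, n₁ ≤ n ∧ (x ∈ (N.fwd n).tail.dropLast ∨ x ∈ (N.bwd n).tail.dropLast))} with hRemdef
  set B0 : Set V := C \ Rem with hB0def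
  have hGR : ∀ x k, NLev N x k → k < n₁ → x ∉ Rem := by
    intro x k hk hks hxR
    rcases hxR with ⟨n, hn, hb⟩ | ⟨n, hn, hf | hf⟩
    · rcases nlev_of_bead N hb hk with rfl | h <;> omega
    · have := nlev_of_inner_fwd N hf hk; omega
    · have := nlev_of_inner_bwd N hf hk; omega
  have hBNR : ∀ n x, x ∈ N.bead n → n ≤ n₁ → x ∉ Rem := by
    intro n x hx hn hxR
    rcases hxR with ⟨n', hn', hb⟩ | ⟨n', hn', hf | hf⟩
    · have := N.bead_eq hx hb; omega
    · exact N.fwd_inner n' x hf n hx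
    · exact N.bwd_inner n' x hf n hx
  have hFNR : ∀ n x, x ∈ N.fwd n → n < n₁ → x ∉ Rem :=
    fun n x hx hn => hGR x n (Or.inr (Or.inl hx)) hn
  have hWNR : ∀ n x, x ∈ N.bwd n → n < n₁ → x ∉ Rem :=
    fun n x hx hn => hGR x n (Or.inr (Or.inr hx)) hn
  set S₁ : Set V := {x | (∃ n, n₀ ≤ n ∧ n ≤ n₁ ∧ x ∈ N.bead n) ∨
      (∃ n, n₀ ≤ n ∧ n < n₁ ∧ (x ∈ N.fwd n ∨ x ∈ N.bwd n))} with hS₁def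
  have hS₁B0 : S₁ ⊆ B0 := by
    rintro x (⟨n, h1, h2, hx⟩ | ⟨n, h1, h2, hx⟩)
    · exact ⟨hGbead n h1 x hx, hBNR n x hx h2⟩
    · refine ⟨hGpath n h1 x hx, ?_⟩
      rcases hx with hx | hx
      · exact hFNR n x hx h2
      · exact hWNR n x hx h2
  have hUD := necklace_updown N (S := S₁) (B := n₁) ha₀
      (fun n hn hB x hx => Or.inl ⟨n, hn, hB, hx⟩)
      (fun n hn hB x hx => Or.inr ⟨n, hn, hB, Or.inl hx⟩)
      (fun n hn hB x hx => Or.inr ⟨n, hn, hB, Or.inr hx⟩)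
  have hPR := necklace_path_reach N (S := S₁) (B := n₁) ha₀
      (fun n hn hB x hx => Or.inl ⟨n, hn, hB, hx⟩)
      (fun n hn hB x hx => Or.inr ⟨n, hn, hB, Or.inl hx⟩)
      (fun n hn hB x hx => Or.inr ⟨n, hn, hB, Or.inr hx⟩)
  have ha₀B0 : a₀ ∈ B0 := ⟨ha₀C, hBNR n₀ a₀ ha₀ hn₀n₁⟩
  have hB0reach : ∀ u ∈ B0,
      Relation.ReflTransGen (fun x y => y ∈ B0 ∧ N.edges x y) a₀ u ∧
      Relation.ReflTransGen (fun x y => y ∈ B0 ∧ N.edges x y) u a₀ := by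
    intro u hu
    obtain ⟨k, hk⟩ := haslev u hu.1
    by_cases hkn : k < n₀
    · have huK : u ∈ K := ⟨hu.1, k, hkn, hk⟩
      obtain ⟨h1, h2⟩ := hmK u huK
      have hsub : C ∩ {z | ∃ k, k ≤ mK ∧ NLev N z k} ⊆ B0 := by
        rintro x ⟨hxC, k', hk', hlev⟩
        exact ⟨hxC, hGR x k' hlev (by omega)⟩
      exact ⟨rtg_mono' hsub h2, rtg_mono' hsub h1⟩
    · push_neg at hkn
      have hbeadcase : ∀ m, n₀ ≤ m → u ∈ N.bead m →
          Relation.ReflTransGen (fun x y => y ∈ B0 ∧ N.edges x y) a₀ u ∧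
          Relation.ReflTransGen (fun x y => y ∈ B0 ∧ N.edges x y) u a₀ := by
        intro m hm hum
        have hmn₁ : m ≤ n₁ := by
          by_contra h
          exact hu.2 (Or.inl ⟨m, by omega, hum⟩)
        have h := hUD m hm hmn₁ u hum
        exact ⟨rtg_mono' hS₁B0 h.1, rtg_mono' hS₁B0 h.2⟩
      rcases hk with h | h | h
      · exact hbeadcase k hkn h
      · rcases mem_split3 h with h' | h' | h'
        · exact hbeadcase k hkn (N.fwd_head _ _ h')
        · exact hbeadcase (k + 1) (by omega) (N.fwd_last _ _ h')
        · have hkn₁ : k < n₁ := by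
            by_contra hc
            exact hu.2 (Or.inr ⟨k, by omega, Or.inl h'⟩)
          have hr := hPR k hkn hkn₁ u (Or.inl h)
          exact ⟨rtg_mono' hS₁B0 hr.1, rtg_mono' hS₁B0 hr.2⟩
      · rcases mem_split3 h with h' | h' | h'
        · exact hbeadcase (k + 1) (by omega) (N.bwd_head _ _ h')
        · exact hbeadcase k hkn (N.bwd_last _ _ h')
        · have hkn₁ : k < n₁ := by
            by_contra hc
            exact hu.2 (Or.inr ⟨k, by omega, Or.inr h'⟩)
          have hr := hPR k hkn hkn₁ u (Or.inr h)
          exact ⟨rtg_mono' hS₁B0 hr.1, rtg_mono' hS₁B0 hr.2⟩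
  have hB0subC : B0 ⊆ C := fun x hx => hx.1
  have hlow : ∀ x ∈ B0, ∃ k, k ≤ n₁ ∧ NLev N x k := by
    intro x hx
    obtain ⟨k, hk⟩ := haslev x hx.1
    rcases hk with h | h | h
    · refine ⟨k, ?_, Or.inl h⟩
      by_contra hc
      exact hx.2 (Or.inl ⟨k, by omega, h⟩)
    · rcases mem_split3 h with h' | h' | h'
      · refine ⟨k, ?_, Or.inr (Or.inl h)⟩
        by_contra hc
        exact hx.2 (Or.inl ⟨k, by omega, N.fwd_head _ _ h'⟩)
      · refine ⟨k, ?_, Or.inr (Or.inl h)⟩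
        by_contra hc
        exact hx.2 (Or.inl ⟨k + 1, by omega, N.fwd_last _ _ h'⟩)
      · refine ⟨k, ?_, Or.inr (Or.inl h)⟩
        by_contra hc
        exact hx.2 (Or.inr ⟨k, by omega, Or.inl h'⟩)
    · rcases mem_split3 h with h' | h' | h'
      · refine ⟨k, ?_, Or.inr (Or.inr h)⟩
        by_contra hc
        exact hx.2 (Or.inl ⟨k + 1, by omega, N.bwd_head _ _ h'⟩)
      · refine ⟨k, ?_, Or.inr (Or.inr h)⟩
        by_contra hc
        exact hx.2 (Or.inl ⟨k, by omega, N.bwd_last _ _ h'⟩)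
      · refine ⟨k, ?_, Or.inr (Or.inr h)⟩
        by_contra hc
        exact hx.2 (Or.inr ⟨k, by omega, Or.inr h'⟩)
  have hB0fin : B0.Finite := by
    have hsub : B0 ⊆ ⋃ k ∈ Set.Iic n₁,
        (N.bead k ∪ {x | x ∈ N.fwd k} ∪ {x | x ∈ N.bwd k}) := by
      intro x hx
      obtain ⟨k, hk, hlev⟩ := hlow x hx
      refine Set.mem_biUnion hk ?_
      simp only [Set.mem_union, Set.mem_setOf_eq]
      rcases hlev with h | h | h
      · exact Or.inl (Or.inl h)
      · exact Or.inl (Or.inr h)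
      · exact Or.inr h
    refine Set.Finite.subset (Set.Finite.biUnion (Set.finite_Iic n₁) fun k _ => ?_) hsub
    exact ((N.bead_fin k).union (List.finite_toSet _)).union (List.finite_toSet _)
  refine ⟨C, ⟨a₀, ha₀X, hCdef⟩, ?_⟩
  refine ⟨⟨fun k => match k with | 0 => B0 | (j + 1) => N.bead (n₁ + (j + 1)),
    fun k => N.fwd (n₁ + k), fun k => N.bwd (n₁ + k),
    ?_, ?_, ?_, ?_, ?_, ?_, ?_, ?_, ?_, ?_, ?_, ?_, ?_, ?_, ?_⟩, ?_, ?_⟩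
  · -- bead_fin
    intro n
    cases n with
    | zero => exact hB0fin
    | succ j => exact N.bead_fin _
  · -- bead_nonempty
    intro n
    cases n with
    | zero => exact ⟨a₀, ha₀B0⟩
    | succ j => exact N.bead_nonempty _
  · -- bead_disj
    intro m n hmn
    cases m with
    | zero =>
      cases n with
      | zero => exact absurd rfl hmn
      | succ j =>
        refine Set.disjoint_left.mpr ?_
        intro x hx hxb
        exact hx.2 (Or.inl ⟨n₁ + (j + 1), by omega, hxb⟩)
    | succ i =>
      cases n with
      | zero =>
        refine Set.disjoint_right.mpr ?_
        intro x hx hxb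
        exact hx.2 (Or.inl ⟨n₁ + (i + 1), by omega, hxb⟩)
      | succ j => exact N.bead_disj _ _ (fun h => hmn (by omega))
  · -- bead_strong
    intro n
    cases n with
    | zero =>
      intro a ha b hb
      exact ⟨ha, hb, rtg_restrict hB0subC ha.1
        ((hB0reach a ha).2.trans (hB0reach b hb).1)⟩
    | succ j =>
      intro a ha b hb
      exact bead_reach_in N (n₁ + (j + 1)) (fun x hx => hGbead _ (by omega) x hx) ha hb
  · -- fwd_path
    intro n
    refine ⟨(N.fwd_path (n₁ + n)).1, (N.fwd_path (n₁ + n)).2.1, ?_⟩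
    refine chain'_strengthen _ (N.fwd_path (n₁ + n)).2.2 fun a b hD hadj => ?_
    exact ⟨⟨hD, Or.inr ⟨n₁ + n, Or.inl hadj⟩⟩,
      hGpath (n₁ + n) (by omega) a (Or.inl (adjInList_mem_left hadj)),
      hGpath (n₁ + n) (by omega) b (Or.inl (adjInList_mem_right hadj))⟩
  · -- bwd_path
    intro n
    refine ⟨(N.bwd_path (n₁ + n)).1, (N.bwd_path (n₁ + n)).2.1, ?_⟩
    refine chain'_strengthen _ (N.bwd_path (n₁ + n)).2.2 fun a b hD hadj => ?_
    exact ⟨⟨hD, Or.inr ⟨n₁ + n, Or.inr hadj⟩⟩,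
      hGpath (n₁ + n) (by omega) a (Or.inr (adjInList_mem_left hadj)),
      hGpath (n₁ + n) (by omega) b (Or.inr (adjInList_mem_right hadj))⟩
  · -- fwd_head
    intro n a ha
    cases n with
    | zero =>
      have hb : a ∈ N.bead n₁ := N.fwd_head n₁ a ha
      exact ⟨hGbead n₁ hn₀n₁ a hb, hBNR n₁ a hb le_rfl⟩
    | succ j => exact N.fwd_head (n₁ + (j + 1)) a ha
  · -- fwd_last
    intro n b hb
    exact N.fwd_last (n₁ + n) b hb
  · -- bwd_head
    intro n a ha
    exact N.bwd_head (n₁ + n) a ha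
  · -- bwd_last
    intro n b hb
    cases n with
    | zero =>
      have hbm : b ∈ N.bead n₁ := N.bwd_last n₁ b hb
      exact ⟨hGbead n₁ hn₀n₁ b hbm, hBNR n₁ b hbm le_rfl⟩
    | succ j => exact N.bwd_last (n₁ + (j + 1)) b hb
  · -- fwd_inner
    intro n x hx m
    cases m with
    | zero => exact fun hxB => hxB.2 (Or.inr ⟨n₁ + n, by omega, Or.inl hx⟩)
    | succ j => exact N.fwd_inner (n₁ + n) x hx (n₁ + (j + 1))
  · -- bwd_inner
    intro n x hx m
    cases m with
    | zero => exact fun hxB => hxB.2 (Or.inr ⟨n₁ + n, by omega, Or.inr hx⟩)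
    | succ j => exact N.bwd_inner (n₁ + n) x hx (n₁ + (j + 1))
  · -- fwd_fwd_disj
    intro m n hmn
    exact N.fwd_fwd_disj _ _ (fun h => hmn (by omega))
  · -- bwd_bwd_disj
    intro m n hmn
    exact N.bwd_bwd_disj _ _ (fun h => hmn (by omega))
  · -- fwd_bwd_disj
    intro m n
    exact N.fwd_bwd_disj _ _
  · -- verts = C
    ext x
    simp only [Necklace.verts, Set.mem_union, Set.mem_iUnion, Set.mem_setOf_eq]
    constructor
    · rintro (⟨k, hk⟩ | ⟨k, hk | hk⟩)
      · cases k with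
        | zero => exact hk.1
        | succ j => exact hGbead _ (by omega) x hk
      · exact hGpath (n₁ + k) (by omega) x (Or.inl hk)
      · exact hGpath (n₁ + k) (by omega) x (Or.inr hk)
    · intro hxC
      by_cases hxR : x ∈ Rem
      · rcases hxR with ⟨n, hn, hb⟩ | ⟨n, hn, hf | hf⟩
        · refine Or.inl ⟨n - n₁, ?_⟩
          have hr : n - n₁ = (n - n₁ - 1) + 1 := by omega
          rw [hr]
          show x ∈ N.bead (n₁ + (n - n₁ - 1 + 1))
          have he : n₁ + (n - n₁ - 1 + 1) = n := by omega
          rw [he]; exact hb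
        · refine Or.inr ⟨n - n₁, Or.inl ?_⟩
          show x ∈ N.fwd (n₁ + (n - n₁))
          have he : n₁ + (n - n₁) = n := by omega
          rw [he]
          exact (List.tail_sublist _).subset ((List.dropLast_sublist _).subset hf)
        · refine Or.inr ⟨n - n₁, Or.inr ?_⟩
          show x ∈ N.bwd (n₁ + (n - n₁))
          have he : n₁ + (n - n₁) = n := by omega
          rw [he]
          exact (List.tail_sublist _).subset ((List.dropLast_sublist _).subset hf)
      · exact Or.inl ⟨0, hxC, hxR⟩
  · -- AttachedTo
    have hinj : Set.InjOn (fun n => n - n₁)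
        ({n | ∀ U ∈ 𝒰, (N.bead n ∩ U).Nonempty} \ Set.Iic n₁) := by
      intro a ha b hb h
      simp only [Set.mem_diff, Set.mem_Iic, not_le] at ha hb
      simp only at h
      omega
    have himg := (hN.diff (Set.finite_Iic n₁)).image hinj
    refine Set.Infinite.mono ?_ himg
    rintro k ⟨n, ⟨hnS, hnI⟩, rfl⟩
    simp only [Set.mem_Iic, not_le] at hnI
    intro U hU
    simp only
    have hr : n - n₁ = (n - n₁ - 1) + 1 := by omega
    rw [hr]
    show (N.bead (n₁ + (n - n₁ - 1 + 1)) ∩ U).Nonempty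
    have he : n₁ + (n - n₁ - 1 + 1) = n := by omega
    rw [he]
    exact hnS U hU
end

section
/- Let D be a digraph and γ a pre-end of D. Then γ includes an end of D if and only if γ is represented both by a directed ray and by a reverse directed ray; moreover, in that case γ includes exactly one end of D. -/
variable {V : Type*}

section Toolkit
variable {V : Type*} {D : V → V → Prop} {S S' : Set V} {A B : Set V} {a b c u v : V}

theorem reachIn_refl (h : a ∈ S) : ReachIn D S a a := ⟨h, h, .refl⟩

theorem reachIn_trans (h1 : ReachIn D S a b) (h2 : ReachIn D S b c) : ReachIn D S a c :=
  ⟨h1.1, h2.2.1, h1.2.2.trans h2.2.2⟩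

theorem reachIn_mono_s5 (hS : S ⊆ S') (h : ReachIn D S a b) : ReachIn D S' a b := by
  obtain ⟨ha, hb, hr⟩ := h
  refine ⟨hS ha, hS hb, ?_⟩
  clear ha hb
  induction hr with
  | refl => exact .refl
  | tail _ h ih => exact Relation.ReflTransGen.tail ih ⟨hS h.1, h.2⟩

theorem reachIn_mem_left (h : ReachIn D S a b) : a ∈ S := h.1
theorem reachIn_mem_right (h : ReachIn D S a b) : b ∈ S := h.2.1

/-- every chain' list whose vertices lie in `S` gives `ReachIn`. -/
theorem reachIn_of_list : ∀ (l : List V), l.Chain' D → (∀ x ∈ l, x ∈ S) →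
    l.head? = some a → l.getLast? = some b → ReachIn D S a b := by
  intro l
  induction l generalizing a with
  | nil => intro _ _ h; simp at h
  | cons x t ih =>
    intro hc hm hh hl
    simp only [List.head?_cons, Option.some.injEq] at hh
    subst hh
    cases t with
    | nil =>
      simp only [List.getLast?_singleton, Option.some.injEq] at hl
      subst hl
      exact reachIn_refl (hm _ (by simp))
    | cons y t' =>
      have hyb : ReachIn D S y b := by
        refine ih ?_ ?_ rfl ?_
        · exact hc.tail
        · intro z hz; exact hm z (List.mem_cons_of_mem _ hz)
        · simpa using hl
      refine ⟨hm _ (by simp), hyb.2.1, Relation.ReflTransGen.head ?_ hyb.2.2⟩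
      exact ⟨hyb.1, (List.isChain_cons_cons.mp hc).1⟩

/-- split a list at the first element satisfying `P`. -/
theorem first_split {P : V → Prop} : ∀ (l : List V), (∃ x ∈ l, P x) →
    ∃ l₁ x l₂, l = l₁ ++ x :: l₂ ∧ P x ∧ ∀ y ∈ l₁, ¬ P y := by
  classical
  intro l
  induction l with
  | nil => rintro ⟨x, hx, -⟩; simp at hx
  | cons z t ih =>
    intro hex
    by_cases hz : P z
    · exact ⟨[], z, t, by simp, hz, by simp⟩
    · obtain ⟨x, hx, hPx⟩ := hex
      rcases List.mem_cons.mp hx with rfl | hx'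
      · exact absurd hPx hz
      · obtain ⟨l₁, x, l₂, heq, hPx', hfirst⟩ := ih ⟨x, hx', hPx⟩
        exact ⟨z :: l₁, x, l₂, by simp [heq], hPx', by
          intro y hy
          rcases List.mem_cons.mp hy with rfl | hy'
          · exact hz
          · exact hfirst y hy'⟩

/-- split a list at the last element satisfying `P`. -/
theorem last_split {P : V → Prop} (l : List V) (h : ∃ x ∈ l, P x) :
    ∃ l₁ x l₂, l = l₁ ++ x :: l₂ ∧ P x ∧ ∀ y ∈ l₂, ¬ P y := by
  obtain ⟨l₁, x, l₂, heq, hPx, hfirst⟩ := first_split l.reverse (by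
    obtain ⟨x, hx, hPx⟩ := h; exact ⟨x, List.mem_reverse.mpr hx, hPx⟩)
  refine ⟨l₂.reverse, x, l₁.reverse, ?_, hPx, ?_⟩
  · have := congrArg List.reverse heq
    simpa using this
  · intro y hy; exact hfirst y (List.mem_reverse.mp hy)

end Toolkit
section Toolkit2
variable {V : Type*} {D : V → V → Prop} {S S' : Set V} {A B : Set V} {a b c u v : V}

theorem mem_of_head?_eq {l : List V} (h : l.head? = some a) : a ∈ l := by
  cases l with
  | nil => simp at h
  | cons p q => simp only [List.head?_cons, Option.some.injEq] at h; simp [h]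

theorem mem_of_getLast?_eq {l : List V} (h : l.getLast? = some b) : b ∈ l := by
  obtain ⟨hne, heq⟩ := List.mem_getLast?_eq_getLast (x := b) (l := l) (by simp [h])
  exact heq ▸ List.getLast_mem hne

/-- From `ReachIn` extract a genuine (nodup) path list. -/
theorem reachIn_to_path (h : ReachIn D S a b) :
    ∃ l : List V, IsPathList D l ∧ l.head? = some a ∧ l.getLast? = some b ∧
      ∀ x ∈ l, x ∈ S := by
  classical
  obtain ⟨ha, hb, hr⟩ := h
  clear hb
  induction hr with
  | refl => exact ⟨[a], ⟨by simp, by simp, List.isChain_singleton _⟩, by simp, by simp, by simpa using ha⟩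
  | @tail x y hxy hstep ih =>
    obtain ⟨l, ⟨hne, hnd, hch⟩, hh, hl, hmem⟩ := ih
    by_cases hy : y ∈ l
    · obtain ⟨l₁, z, l₂, heq, hz, hfirst⟩ := first_split (P := fun t => t = y) l ⟨y, hy, rfl⟩
      subst hz
      have hsub : (l₁ ++ [z]).Sublist l := by
        rw [heq]
        exact (List.cons_sublist_cons.mpr (List.nil_sublist _)).append_left l₁
      have hpre : (l₁ ++ [z]).IsPrefix l := ⟨l₂, by rw [heq]; simp⟩
      refine ⟨l₁ ++ [z], ⟨by simp, hnd.sublist hsub, hch.prefix hpre⟩, ?_,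
        List.getLast?_concat, fun x' hx' => hmem _ (hsub.mem hx')⟩
      cases l₁ with
      | nil => rw [heq] at hh; simpa using hh
      | cons p q => rw [heq] at hh; simpa using hh
    · refine ⟨l ++ [y], ⟨by simp, ?_, ?_⟩, ?_, List.getLast?_concat, ?_⟩
      · simp [List.nodup_append, hnd, hy]
        exact fun a ha h => hy (h ▸ ha)
      · refine List.IsChain.append hch (List.isChain_singleton _) ?_
        intro x' hx' y' hy'
        simp only [List.head?_cons, Option.mem_def, Option.some.injEq] at hy'
        subst hy'
        rw [hl] at hx'
        simp only [Option.mem_def, Option.some.injEq] at hx'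
        subst hx'
        exact hstep.2
      · cases l with
        | nil => simp at hh
        | cons p q => simpa using hh
      · intro x' hx'
        rcases List.mem_append.mp hx' with h' | h'
        · exact hmem _ h'
        · simp only [List.mem_singleton] at h'; subst h'; exact hstep.1

/-- Trim a path so that it meets `A` only in its first vertex (keeping the last vertex). -/
theorem trimA (l : List V) (hP : IsPathList D l) (hh : l.head? = some a) (ha : a ∈ A)
    (hl : l.getLast? = some b) (hmem : ∀ x ∈ l, x ∈ S) :
    ∃ l' : List V, IsPathList D l' ∧ (∃ a', l'.head? = some a' ∧ a' ∈ A) ∧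
      l'.getLast? = some b ∧ (∀ x ∈ l'.tail, x ∉ A) ∧ (∀ x ∈ l', x ∈ S) ∧
      l'.Sublist l := by
  obtain ⟨hne, hnd, hch⟩ := hP
  obtain ⟨l₁, x, l₂, heq, hx, hlast⟩ := last_split (P := fun t => t ∈ A) l
    ⟨a, mem_of_head?_eq hh, ha⟩
  have hsuf : (x :: l₂).IsSuffix l := ⟨l₁, heq.symm⟩
  refine ⟨x :: l₂, ⟨by simp, hnd.sublist hsuf.sublist, hch.suffix hsuf⟩,
    ⟨x, by simp, hx⟩, ?_, by simpa using hlast, fun y hy => hmem _ (hsuf.sublist.mem hy),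
    hsuf.sublist⟩
  rw [heq] at hl
  rwa [List.getLast?_append_of_ne_nil _ (by simp)] at hl

/-- Trim a path so that it meets `B` only in its last vertex (keeping the first vertex). -/
theorem trimB (l : List V) (hP : IsPathList D l) (hh : l.head? = some a)
    (hl : l.getLast? = some b) (hb : b ∈ B) (hmem : ∀ x ∈ l, x ∈ S) :
    ∃ l' : List V, IsPathList D l' ∧ l'.head? = some a ∧
      (∃ b', l'.getLast? = some b' ∧ b' ∈ B) ∧ (∀ x ∈ l'.dropLast, x ∉ B) ∧
      (∀ x ∈ l', x ∈ S) ∧ l'.Sublist l ∧ l'.tail.Sublist l.tail := by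
  obtain ⟨hne, hnd, hch⟩ := hP
  have hbmem : b ∈ l := mem_of_getLast?_eq hl
  obtain ⟨l₁, x, l₂, heq, hx, hfirst⟩ := first_split (P := fun t => t ∈ B) l ⟨b, hbmem, hb⟩
  have hpre : (l₁ ++ [x]).IsPrefix l := ⟨l₂, by rw [heq]; simp⟩
  have hsub : (l₁ ++ [x]).Sublist l := hpre.sublist
  refine ⟨l₁ ++ [x], ⟨by simp, hnd.sublist hsub, hch.prefix hpre⟩, ?_,
    ⟨x, List.getLast?_concat, hx⟩, ?_, fun y hy => hmem _ (hsub.mem hy), hsub, ?_⟩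
  · cases l₁ with
    | nil => rw [heq] at hh; simpa using hh
    | cons p q => rw [heq] at hh; simpa using hh
  · intro y hy
    rw [List.dropLast_concat] at hy
    exact hfirst y hy
  · cases l₁ with
    | nil => simp
    | cons p q =>
      rw [heq]
      simpa using (List.cons_sublist_cons.mpr (List.nil_sublist _)).append_left q

end Toolkit2
section Toolkit3
variable {V : Type*} {D : V → V → Prop} {S : Set V} {A B : Set V} {a b u v : V}

/-- A "good" `A`–`B` path avoiding `W`, out of a `ReachIn` witness. -/
theorem goodify {W : Finset V} (ha : a ∈ A) (hb : b ∈ B)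
    (h : ReachIn D ((↑W : Set V)ᶜ) a b) :
    ∃ l : List V, IsPathList D l ∧ (∃ a', l.head? = some a' ∧ a' ∈ A) ∧
      (∃ b', l.getLast? = some b' ∧ b' ∈ B) ∧ (∀ x ∈ l.tail, x ∉ A) ∧
      (∀ x ∈ l.dropLast, x ∉ B) ∧ ∀ x ∈ l, x ∉ W := by
  obtain ⟨l, hP, hh, hl, hmem⟩ := reachIn_to_path h
  obtain ⟨l', hP', ⟨a', hh', ha'⟩, hl', htail, hmem', -⟩ := trimA (A := A) l hP hh ha hl hmem
  obtain ⟨l'', hP'', hh'', ⟨b', hlast'', hb''⟩, hdrop, hmem'', hsub, htsub⟩ :=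
    trimB (B := B) l' hP' hh' hl' hb hmem'
  refine ⟨l'', hP'', ⟨a', hh'', ha'⟩, ⟨b', hlast'', hb''⟩, ?_, hdrop, ?_⟩
  · intro x hx; exact htail x (htsub.mem hx)
  · intro x hx; exact hmem'' x hx

/-- Greedy construction of infinitely many disjoint paths. -/
theorem build_dpf
    (h : ∀ W : Finset V, ∃ a ∈ A, ∃ b ∈ B, ReachIn D ((↑W : Set V)ᶜ) a b) :
    DisjointPathsFrom D A B := by
  classical
  have h' : ∀ W : Finset V, ∃ l : List V, (IsPathList D l ∧
      (∃ a', l.head? = some a' ∧ a' ∈ A) ∧ (∃ b', l.getLast? = some b' ∧ b' ∈ B) ∧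
      (∀ x ∈ l.tail, x ∉ A) ∧ (∀ x ∈ l.dropLast, x ∉ B)) ∧ ∀ x ∈ l, x ∉ W := by
    intro W
    obtain ⟨a, ha, b, hb, hr⟩ := h W
    obtain ⟨l, h1, h2, h3, h4, h5, h6⟩ := goodify ha hb hr
    exact ⟨l, ⟨h1, h2, h3, h4, h5⟩, h6⟩
  choose f hf hav using h'
  let acc : ℕ → Finset V := fun n => Nat.rec (∅ : Finset V)
    (fun k W => W ∪ (f W).toFinset) n
  have hacc : ∀ n, acc (n + 1) = acc n ∪ (f (acc n)).toFinset := fun n => rfl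
  have hmono : ∀ {m n}, m ≤ n → acc m ⊆ acc n := by
    intro m n hmn
    induction hmn with
    | refl => exact Finset.Subset.refl _
    | step h ih => exact ih.trans (by rw [hacc]; exact Finset.subset_union_left)
  refine ⟨fun k => f (acc k), fun k => (hf _).1, ?_, fun k => (hf _).2.1,
    fun k => (hf _).2.2.1, fun k => (hf _).2.2.2.1, fun k => (hf _).2.2.2.2⟩
  have key : ∀ {j k}, j < k → ∀ x ∈ f (acc j), x ∉ f (acc k) := by
    intro j k hjk x hxj hxk
    have hsub : (f (acc j)).toFinset ⊆ acc k := by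
      have h1 : (f (acc j)).toFinset ⊆ acc (j + 1) := by
        rw [hacc]; exact Finset.subset_union_right
      exact h1.trans (hmono hjk)
    exact hav (acc k) x hxk (hsub (List.mem_toFinset.mpr hxj))
  intro j k hjk x hxj hxk
  rcases lt_or_gt_of_ne hjk with h' | h'
  · exact key h' x hxj hxk
  · exact key h' x hxk hxj

/-- Pull one suitable path out of a disjoint family between ranges of injections. -/
theorem extract_dpf {f g : ℕ → V} (hP : DisjointPathsFrom D (Set.range f) (Set.range g))
    (hf : Function.Injective f) (hg : Function.Injective g)
    (W : Finset V) (N M : ℕ) :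
    ∃ i j, N ≤ i ∧ M ≤ j ∧ ReachIn D ((↑W : Set V)ᶜ) (f i) (g j) := by
  classical
  obtain ⟨P, hpath, hdisj, hhead, hlast, -, -⟩ := hP
  have hK1 : {k | ∃ x ∈ W, x ∈ P k}.Finite := by
    have : {k | ∃ x ∈ W, x ∈ P k} ⊆ ⋃ x ∈ (W : Set V), {k | x ∈ P k} := by
      intro k ⟨x, hxW, hxP⟩; exact Set.mem_biUnion hxW hxP
    refine Set.Finite.subset (Set.Finite.biUnion W.finite_toSet fun x _ => ?_) this
    refine Set.Subsingleton.finite ?_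
    intro k1 h1 k2 h2
    by_contra hne
    exact hdisj k1 k2 hne x h1 h2
  have hhead' : ∀ k, ∃ i, (P k).head? = some (f i) := by
    intro k
    obtain ⟨a, hha, ⟨i, rfl⟩⟩ := hhead k
    exact ⟨i, hha⟩
  have hlast' : ∀ k, ∃ j, (P k).getLast? = some (g j) := by
    intro k
    obtain ⟨b, hb, ⟨j, rfl⟩⟩ := hlast k
    exact ⟨j, hb⟩
  choose hi hhi using hhead'
  choose hj hhj using hlast'
  have hK2 : {k | hi k < N}.Finite := by
    have hinj : Set.InjOn hi {k | hi k < N} := by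
      intro k1 _ k2 _ heq
      by_contra hne
      refine hdisj k1 k2 hne (f (hi k1)) (mem_of_head?_eq (hhi k1)) ?_
      rw [heq]
      exact mem_of_head?_eq (hhi k2)
    have : {k | hi k < N}.MapsTo hi {i | i < N} := fun k hk => hk
    exact Set.Finite.of_finite_image (Set.Finite.subset (Set.finite_Iio N)
      (Set.image_subset_iff.mpr this)) hinj
  have hK3 : {k | hj k < M}.Finite := by
    have hinj : Set.InjOn hj {k | hj k < M} := by
      intro k1 _ k2 _ heq
      by_contra hne
      refine hdisj k1 k2 hne (g (hj k1)) (mem_of_getLast?_eq (hhj k1)) ?_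
      rw [heq]
      exact mem_of_getLast?_eq (hhj k2)
    have : {k | hj k < M}.MapsTo hj {j | j < M} := fun k hk => hk
    exact Set.Finite.of_finite_image (Set.Finite.subset (Set.finite_Iio M)
      (Set.image_subset_iff.mpr this)) hinj
  obtain ⟨k, hk⟩ := ((hK1.union hK2).union hK3).infinite_compl.nonempty
  simp only [Set.mem_compl_iff, Set.mem_union, Set.mem_setOf_eq, not_or, not_lt, not_exists,
    not_and, not_le] at hk
  obtain ⟨⟨hkW, hkN⟩, hkM⟩ := hk
  refine ⟨hi k, hj k, hkN, hkM, ?_⟩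
  refine reachIn_of_list (P k) (hpath k).2.2 ?_ (hhi k) (hhj k)
  intro x hx
  simp only [Set.mem_compl_iff, Finset.mem_coe]
  intro hxW
  exact hkW x hxW hx

end Toolkit3
section Toolkit4
variable {V : Type*} {D : V → V → Prop} {S : Set V} {C C' : Set V} {a b u v : V} {R : ℕ → V}

/-- Beyond some threshold a ray avoids any finite set. -/
theorem ray_threshold (hR : Function.Injective R) (W : Finset V) :
    ∃ n₀, ∀ i, n₀ ≤ i → R i ∉ W := by
  have hfin : {i | R i ∈ W}.Finite :=
    Set.Finite.preimage hR.injOn W.finite_toSet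
  obtain ⟨n, hn⟩ := hfin.bddAbove
  exact ⟨n + 1, fun i hi hRi => by
    have := hn (Set.mem_setOf_eq ▸ hRi : R i ∈ W)
    omega⟩

theorem ray_reach (hR : ∀ n, D (R n) (R (n + 1))) {i j : ℕ} (hij : i ≤ j)
    (hS : ∀ k, i ≤ k → k ≤ j → R k ∈ S) : ReachIn D S (R i) (R j) := by
  induction j with
  | zero =>
    have : i = 0 := Nat.le_zero.mp hij
    subst this
    exact reachIn_refl (hS 0 le_rfl le_rfl)
  | succ j ih =>
    rcases Nat.lt_or_ge i (j + 1) with h' | h'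
    · have hij' : i ≤ j := Nat.lt_succ_iff.mp h'
      have hr : ReachIn D S (R i) (R j) := ih hij' fun k hk1 hk2 => hS k hk1 (hk2.trans (by omega))
      exact reachIn_trans hr ⟨hr.2.1, hS (j+1) (by omega) le_rfl,
        Relation.ReflTransGen.single ⟨hS (j+1) (by omega) le_rfl, hR j⟩⟩
    · have : i = j + 1 := le_antisymm hij h'
      subst this
      exact reachIn_refl (hS _ le_rfl le_rfl)

theorem revRay_reach (hR : ∀ n, D (R (n + 1)) (R n)) {i j : ℕ} (hij : i ≤ j)
    (hS : ∀ k, i ≤ k → k ≤ j → R k ∈ S) : ReachIn D S (R j) (R i) := by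
  induction j with
  | zero =>
    have : i = 0 := Nat.le_zero.mp hij
    subst this
    exact reachIn_refl (hS 0 le_rfl le_rfl)
  | succ j ih =>
    rcases Nat.lt_or_ge i (j + 1) with h' | h'
    · have hij' : i ≤ j := Nat.lt_succ_iff.mp h'
      have hr : ReachIn D S (R j) (R i) := ih hij' fun k hk1 hk2 => hS k hk1 (hk2.trans (by omega))
      refine reachIn_trans ⟨hS (j+1) (by omega) le_rfl, hr.1,
        Relation.ReflTransGen.single ⟨hr.1, hR j⟩⟩ hr
    · have : i = j + 1 := le_antisymm hij h'
      subst this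
      exact reachIn_refl (hS _ le_rfl le_rfl)

/-- Members of a strong component are mutually reachable. -/
theorem sccIn_reach (hC : IsSCCIn D S C) (hu : u ∈ C) (hv : v ∈ C) : ReachIn D S u v := by
  obtain ⟨a₀, ha₀, rfl⟩ := hC
  exact reachIn_trans hu.2 hv.1

/-- A vertex mutually reachable with a member of a strong component belongs to it. -/
theorem sccIn_mem (hC : IsSCCIn D S C) (hv : v ∈ C) (h1 : ReachIn D S v u)
    (h2 : ReachIn D S u v) : u ∈ C := by
  obtain ⟨a₀, ha₀, rfl⟩ := hC
  exact ⟨reachIn_trans hv.1 h1, reachIn_trans h2 hv.2⟩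

theorem sccIn_subset (hC : IsSCCIn D S C) : C ⊆ S := by
  obtain ⟨a₀, ha₀, rfl⟩ := hC
  intro x hx
  exact hx.1.2.1

/-- Monotonicity: a strong component of a smaller digraph sharing a vertex is contained. -/
theorem sccIn_mono {S' : Set V} (hC : IsSCCIn D S C) (hC' : IsSCCIn D S' C')
    (hS : S' ⊆ S) (hv : v ∈ C) (hv' : v ∈ C') : C' ⊆ C := by
  intro u hu
  exact sccIn_mem hC hv (reachIn_mono_s5 hS (sccIn_reach hC' hv' hu))
    (reachIn_mono_s5 hS (sccIn_reach hC' hu hv'))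

/-- Generic routing through a generalized ray `S` with disjoint-path families on both sides. -/
theorem route2 {b : Bool} {Q : ℕ → V} {f g : ℕ → V} (hQ : IsGenRay D (b, Q))
    (hf : Function.Injective f) (hg : Function.Injective g)
    (F : DisjointPathsFrom D (Set.range f) (Set.range Q))
    (G : DisjointPathsFrom D (Set.range Q) (Set.range g))
    (X : Finset V) (N M : ℕ) :
    ∃ i j, N ≤ i ∧ M ≤ j ∧ ReachIn D ((↑X : Set V)ᶜ) (f i) (g j) := by
  cases b with
  | true =>
    obtain ⟨hQinj, hQe⟩ := (hQ : IsRay D Q)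
    obtain ⟨nQ, hnQ⟩ := ray_threshold hQinj X
    obtain ⟨i, t, hiN, htQ, h1⟩ := extract_dpf F hf hQinj X N nQ
    obtain ⟨s, j, hs, hjM, h2⟩ := extract_dpf G hQinj hg X (max t nQ) M
    refine ⟨i, j, hiN, hjM, reachIn_trans (reachIn_trans h1 ?_) h2⟩
    exact ray_reach hQe (le_trans (le_max_left _ _) hs) fun k hk1 hk2 => by
      simp only [Set.mem_compl_iff, Finset.mem_coe]
      exact hnQ k (le_trans htQ hk1)
  | false =>
    obtain ⟨hQinj, hQe⟩ := (hQ : IsRevRay D Q)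
    obtain ⟨nQ, hnQ⟩ := ray_threshold hQinj X
    obtain ⟨s, j, hs, hjM, h2⟩ := extract_dpf G hQinj hg X nQ M
    obtain ⟨i, t, hiN, ht, h1⟩ := extract_dpf F hf hQinj X N (max s nQ)
    refine ⟨i, j, hiN, hjM, reachIn_trans (reachIn_trans h1 ?_) h2⟩
    refine revRay_reach hQe (le_trans (le_max_left _ _) ht) fun k hk1 hk2 => by
      simp only [Set.mem_compl_iff, Finset.mem_coe]
      exact hnQ k (le_trans hs hk1)

/-- Compose two disjoint path families through a ray in the middle. -/
theorem comp_dpf {R : ℕ → V} {f g : ℕ → V} (hR : IsRay D R)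
    (hf : Function.Injective f) (hg : Function.Injective g)
    (F : DisjointPathsFrom D (Set.range f) (Set.range R))
    (G : DisjointPathsFrom D (Set.range R) (Set.range g)) :
    DisjointPathsFrom D (Set.range f) (Set.range g) := by
  refine build_dpf fun W => ?_
  obtain ⟨hRinj, hRe⟩ := hR
  obtain ⟨nW, hnW⟩ := ray_threshold hRinj W
  obtain ⟨i, t, -, htW, h1⟩ := extract_dpf F hf hRinj W 0 nW
  obtain ⟨s, j, hs, -, h2⟩ := extract_dpf G hRinj hg W (max t nW) 0
  refine ⟨f i, Set.mem_range_self i, g j, Set.mem_range_self j,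
    reachIn_trans (reachIn_trans h1 ?_) h2⟩
  exact ray_reach hRe (le_trans (le_max_left _ _) hs) fun k hk1 hk2 => by
    simp only [Set.mem_compl_iff, Finset.mem_coe]
    exact hnW k (le_trans htW hk1)

end Toolkit4
section Core
variable {V : Type*} {D : V → V → Prop}

theorem genray_inj {b : Bool} {Q : ℕ → V} (hQ : IsGenRay D (b, Q)) :
    Function.Injective Q := by
  cases b with
  | true => exact (hQ : IsRay D Q).1
  | false => exact (hQ : IsRevRay D Q).1

/-- A ray pre-equivalent (via `Q`) to a reverse ray is solid. -/
theorem solid_of_sandwich {b : Bool} {Q R R' : ℕ → V}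
    (hQ : IsGenRay D (b, Q)) (hR : IsRay D R) (hR' : IsRevRay D R')
    (F1 : DisjointPathsFrom D (Set.range R) (Set.range Q))
    (F2 : DisjointPathsFrom D (Set.range Q) (Set.range R))
    (G1 : DisjointPathsFrom D (Set.range R') (Set.range Q))
    (G2 : DisjointPathsFrom D (Set.range Q) (Set.range R')) :
    Solid D R := by
  refine ⟨hR, fun X => ?_⟩
  obtain ⟨nR, hnR⟩ := ray_threshold hR.1 X
  obtain ⟨nR', hnR'⟩ := ray_threshold hR'.1 X
  obtain ⟨u₀, w₀, hu₀, hw₀, hub⟩ := route2 hQ hR'.1 hR.1 G1 F2 X nR' nR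
  set N := max nR w₀ with hN
  have hNX : R N ∈ ((↑X : Set V)ᶜ) := by
    simp only [Set.mem_compl_iff, Finset.mem_coe]
    exact hnR N (le_max_left _ _)
  refine ⟨{z | ReachIn D ((↑X : Set V)ᶜ) (R N) z ∧ ReachIn D ((↑X : Set V)ᶜ) z (R N)},
    ⟨R N, hNX, rfl⟩, N, fun m hm => ?_⟩
  constructor
  · exact ray_reach hR.2 hm fun k hk1 hk2 => by
      simp only [Set.mem_compl_iff, Finset.mem_coe]
      exact hnR k (le_trans (le_max_left _ _) hk1)
  · obtain ⟨s₁, t₂, hs₁, ht₂, hmid⟩ := route2 hQ hR.1 hR'.1 F1 G2 X m u₀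
    have h1 : ReachIn D ((↑X : Set V)ᶜ) (R m) (R s₁) :=
      ray_reach hR.2 hs₁ fun k hk1 hk2 => by
        simp only [Set.mem_compl_iff, Finset.mem_coe]
        exact hnR k (le_trans (le_trans (le_max_left _ _) hm) hk1)
    have h2 : ReachIn D ((↑X : Set V)ᶜ) (R' t₂) (R' u₀) :=
      revRay_reach hR'.2 ht₂ fun k hk1 hk2 => by
        simp only [Set.mem_compl_iff, Finset.mem_coe]
        exact hnR' k (le_trans hu₀ hk1)
    have h3 : ReachIn D ((↑X : Set V)ᶜ) (R w₀) (R N) :=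
      ray_reach hR.2 (le_max_right _ _) fun k hk1 hk2 => by
        simp only [Set.mem_compl_iff, Finset.mem_coe]
        exact hnR k (le_trans hw₀ hk1)
    exact reachIn_trans h1 (reachIn_trans hmid (reachIn_trans h2 (reachIn_trans hub h3)))

/-- Two rays pre-equivalent to the same generalized ray are end-equivalent
(provided the first is solid). -/
theorem endEquiv_of_preequiv {b : Bool} {Q R R' : ℕ → V}
    (hQ : IsGenRay D (b, Q)) (hR : IsRay D R) (hR' : IsRay D R') (hSol : Solid D R)
    (F1 : DisjointPathsFrom D (Set.range R) (Set.range Q))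
    (F2 : DisjointPathsFrom D (Set.range Q) (Set.range R))
    (H1 : DisjointPathsFrom D (Set.range R') (Set.range Q))
    (H2 : DisjointPathsFrom D (Set.range Q) (Set.range R')) :
    EndEquiv D R R' := by
  intro X
  obtain ⟨C, hC, nC, hTail⟩ := hSol.2 X
  obtain ⟨nR, hnR⟩ := ray_threshold hR.1 X
  obtain ⟨nR', hnR'⟩ := ray_threshold hR'.1 X
  obtain ⟨s₀, w₀, hs₀, hw₀, hchain⟩ := route2 hQ hR.1 hR'.1 F1 H2 X (max nC nR) nR'
  refine ⟨C, hC, ⟨nC, hTail⟩, max nR' w₀, fun n hn => ?_⟩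
  have hs₀C : R s₀ ∈ C := hTail _ (le_trans (le_max_left _ _) hs₀)
  have h1 : ReachIn D ((↑X : Set V)ᶜ) (R s₀) (R' n) := by
    refine reachIn_trans hchain (ray_reach hR'.2 (le_trans (le_max_right _ _) hn) ?_)
    intro k hk1 hk2
    simp only [Set.mem_compl_iff, Finset.mem_coe]
    exact hnR' k (le_trans hw₀ hk1)
  have h2 : ReachIn D ((↑X : Set V)ᶜ) (R' n) (R s₀) := by
    obtain ⟨s₂, w₂, hs₂, hw₂, hmid⟩ := route2 hQ hR'.1 hR.1 H1 F2 X n (max nC nR)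
    have hstep : ReachIn D ((↑X : Set V)ᶜ) (R' n) (R' s₂) := by
      refine ray_reach hR'.2 hs₂ ?_
      intro k hk1 hk2
      simp only [Set.mem_compl_iff, Finset.mem_coe]
      exact hnR' k (le_trans (le_trans (le_max_left _ _) hn) hk1)
    have hw₂C : R w₂ ∈ C := hTail _ (le_trans (le_max_left _ _) hw₂)
    exact reachIn_trans hstep (reachIn_trans hmid (sccIn_reach hC hw₂C hs₀C))
  exact sccIn_mem hC hs₀C h1 h2

/-- Pre-equivalence transfers along end-equivalence. -/
theorem preequiv_transfer {b : Bool} {Q R R₂ : ℕ → V}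
    (hQ : IsGenRay D (b, Q)) (hR : IsRay D R)
    (F1 : DisjointPathsFrom D (Set.range R) (Set.range Q))
    (F2 : DisjointPathsFrom D (Set.range Q) (Set.range R))
    (hEq : EndEquiv D R R₂) :
    DisjointPathsFrom D (Set.range Q) (Set.range R₂) ∧
      DisjointPathsFrom D (Set.range R₂) (Set.range Q) := by
  have hQinj := genray_inj hQ
  constructor
  · refine build_dpf fun W => ?_
    obtain ⟨C, hC, ⟨nC, hTR⟩, ⟨nC₂, hTR₂⟩⟩ := hEq W
    obtain ⟨qi, w, -, hw, hreach⟩ := extract_dpf F2 hQinj hR.1 W 0 nC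
    refine ⟨Q qi, Set.mem_range_self _, R₂ nC₂, Set.mem_range_self _, ?_⟩
    exact reachIn_trans hreach (sccIn_reach hC (hTR _ hw) (hTR₂ _ le_rfl))
  · refine build_dpf fun W => ?_
    obtain ⟨C, hC, ⟨nC, hTR⟩, ⟨nC₂, hTR₂⟩⟩ := hEq W
    obtain ⟨s, qj, hs, -, hreach⟩ := extract_dpf F1 hR.1 hQinj W nC 0
    refine ⟨R₂ nC₂, Set.mem_range_self _, Q qj, Set.mem_range_self _, ?_⟩
    exact reachIn_trans (sccIn_reach hC (hTR₂ _ le_rfl) (hTR _ hs)) hreach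

end Core
section SpineHelpers
variable {V : Type*} {D : V → V → Prop} {a b x y q d : V} {l l₁ l₂ : List V}

theorem nodup_unique_split : ∀ (a : List V) {a' : List V} {x : V} {b b' : List V},
    (a ++ x :: b).Nodup → a ++ x :: b = a' ++ x :: b' → b = b' := by
  intro a
  induction a with
  | nil =>
    intro a' x b b' hnd heq
    cases a' with
    | nil => simpa using heq
    | cons z a'' =>
      simp only [List.nil_append, List.cons_append, List.cons.injEq] at heq
      obtain ⟨rfl, heq'⟩ := heq
      exfalso
      have : x ∈ a'' ++ x :: b' := by simp
      rw [← heq'] at this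
      exact (List.nodup_cons.mp hnd).1 this
  | cons w a₂ ih =>
    intro a' x b b' hnd heq
    cases a' with
    | nil =>
      simp only [List.cons_append, List.nil_append, List.cons.injEq] at heq
      obtain ⟨rfl, heq'⟩ := heq
      exfalso
      have : w ∈ a₂ ++ w :: b := by simp
      rw [heq'] at this
      exact (List.nodup_cons.mp (by simpa using hnd)).1 this
    | cons z a₂' =>
      simp only [List.cons_append, List.cons.injEq] at heq
      obtain ⟨rfl, heq'⟩ := heq
      exact ih (List.nodup_cons.mp (by simpa using hnd)).2 heq'

theorem head?_append_cons (pre : List V) (y : V) (l l' : List V) :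
    (pre ++ y :: l).head? = (pre ++ y :: l').head? := by
  cases pre <;> simp

theorem getD_reverse_agree (h : l₁.IsSuffix l₂) {p : ℕ} (hp : p < l₁.length) (d : V) :
    l₂.reverse.getD p d = l₁.reverse.getD p d := by
  obtain ⟨t, rfl⟩ := h
  rw [List.reverse_append, List.getD_append _ _ _ _ (by simpa using hp)]

theorem getD_reverse_mem {p : ℕ} (hp : p < l.length) (d : V) :
    l.reverse.getD p d ∈ l := by
  rw [List.getD_eq_getElem _ _ (by simpa using hp)]
  exact List.mem_reverse.mp (List.getElem_mem _)

theorem mem_exists_getD_reverse (hx : x ∈ l) :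
    ∃ p, p < l.length ∧ l.reverse.getD p d = x := by
  obtain ⟨i, hi, hget⟩ := List.mem_iff_getElem.mp (List.mem_reverse.mpr hx)
  exact ⟨i, by simpa using hi, by rw [List.getD_eq_getElem _ _ hi]; exact hget⟩

theorem getD_reverse_inj (hnd : l.Nodup) {p q : ℕ} (hp : p < l.length) (hq : q < l.length)
    (hne : p ≠ q) (d : V) : l.reverse.getD p d ≠ l.reverse.getD q d := by
  rw [List.getD_eq_getElem _ _ (by simpa using hp), List.getD_eq_getElem _ _ (by simpa using hq)]
  intro heq
  have hnd' : l.reverse.Nodup := List.nodup_reverse.mpr hnd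
  have := List.nodup_iff_injective_getElem.mp hnd' (a₁ := ⟨p, by simpa using hp⟩) (a₂ := ⟨q, by simpa using hq⟩) heq
  exact hne (by simpa using congrArg Fin.val this)

theorem chain'_reverse_getD (hch : l.Chain' D) {i : ℕ} (hi : i + 1 < l.length) (d : V) :
    D (l.reverse.getD (i + 1) d) (l.reverse.getD i d) := by
  rw [List.getD_eq_getElem _ _ (by simpa using hi),
    List.getD_eq_getElem _ _ (by simp; omega)]
  rw [List.getElem_reverse, List.getElem_reverse]
  have h := List.isChain_iff_getElem.mp hch (l.length - 1 - (i+1)) (by omega)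
  convert h using 2
  omega

theorem not_mem_dropLast_getLast (hnd : l.Nodup) (hl : l.getLast? = some q) :
    q ∉ l.dropLast := by
  intro hq
  have heq := List.dropLast_append_getLast? (l := l) q hl
  rw [← heq] at hnd
  rw [List.nodup_append] at hnd
  exact hnd.2.2 q hq q (by simp) rfl

end SpineHelpers
namespace SpineAux
variable {V : Type*}

structure St (V : Type*) where
  c : ℕ
  seg : List V
  Uprev : Finset V
  U : Finset V

variable [DecidableEq V] (D : V → V → Prop) (R : ℕ → V) (thr : Finset V → ℕ)

def Good (s : St V) : Prop :=
  s.seg ≠ [] ∧ s.seg.Nodup ∧ s.seg.Chain' D ∧ s.seg.head? = some (R s.c) ∧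
  (∀ x ∈ s.seg, x ∈ s.U) ∧ s.Uprev ⊆ s.U ∧ thr s.Uprev ≤ s.c

def Rel (s s' : St V) : Prop :=
  s'.Uprev = s.U ∧ thr s.U ≤ s'.c ∧
  ∃ ψ pre post s1 s2 y,
    ψ = pre ++ y :: post ∧ s.seg = s1 ++ y :: s2 ∧ s'.seg = pre ++ y :: s2 ∧
    s'.U = s.U ∪ ψ.toFinset ∧ ψ.head? = some (R s'.c) ∧ ψ.getLast? = some (R s.c) ∧
    ψ.Nodup ∧ ψ.Chain' D ∧ (∀ x ∈ ψ, x ∉ s.Uprev) ∧ ∀ x ∈ pre, x ∉ s.seg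

variable {D R thr}

theorem step (comp : Finset V → Set V)
    (hcomp : ∀ X : Finset V, IsSCCIn D ((↑X : Set V)ᶜ) (comp X))
    (hthr : ∀ (X : Finset V) (m : ℕ), thr X ≤ m → R m ∈ comp X)
    (s : St V) (hs : Good D R thr s) :
    ∃ s', Good D R thr s' ∧ Rel D R thr s s' := by
  classical
  obtain ⟨hne, hnd, hch, hhead, hsub, hUP, hcthr⟩ := hs
  set c' := max (thr s.U) (thr s.Uprev) with hc'
  have hfrom : R c' ∈ comp s.Uprev := hthr _ _ (le_max_right _ _)
  have hto : R s.c ∈ comp s.Uprev := hthr _ _ hcthr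
  have hreach : ReachIn D ((↑s.Uprev : Set V)ᶜ) (R c') (R s.c) :=
    sccIn_reach (hcomp s.Uprev) hfrom hto
  obtain ⟨ψ, ⟨hψne, hψnd, hψch⟩, hψh, hψl, hψmem⟩ := reachIn_to_path hreach
  have hex : ∃ x ∈ ψ, x ∈ s.seg := ⟨R s.c, mem_of_getLast?_eq hψl, mem_of_head?_eq hhead⟩
  obtain ⟨pre, y, post, hψeq, hymem, hpre⟩ := first_split ψ hex
  obtain ⟨s1, y', s2, hseq, hy', hs1⟩ :=
    first_split (P := fun t => t = y) s.seg ⟨y, hymem, rfl⟩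
  subst hy'
  refine ⟨St.mk c' (pre ++ y' :: s2) s.U (s.U ∪ ψ.toFinset), ⟨?_, ?_, ?_, ?_, ?_, ?_, ?_⟩,
    rfl, le_max_left _ _, ψ, pre, post, s1, s2, y', hψeq, hseq, rfl, rfl, hψh, hψl,
    hψnd, hψch, ?_, hpre⟩
  · simp
  · rw [List.nodup_append]
    have hψnd' := hψeq ▸ hψnd
    refine ⟨(List.nodup_append.mp (by simpa using hψnd')).1, ?_, ?_⟩
    · have := hseq ▸ hnd
      exact List.Nodup.sublist (List.sublist_append_right s1 (y' :: s2)) this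
    · intro x hx
      have hxseg : x ∉ s.seg := hpre x hx
      intro b hb hx2
      subst hx2
      exact hxseg (by rw [hseq]; exact List.mem_append_right _ hb)
  · show List.IsChain D (pre ++ y' :: s2)
    rw [List.isChain_append]
    have hψch' : List.IsChain D (pre ++ y' :: post) := hψeq ▸ hψch
    rw [List.isChain_append (l₁ := pre) (l₂ := y' :: post)] at hψch'
    have hsegch : List.IsChain D (s1 ++ y' :: s2) := hseq ▸ hch
    rw [List.isChain_append (l₁ := s1) (l₂ := y' :: s2)] at hsegch
    exact ⟨hψch'.1, hsegch.2.1, by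
      intro a ha z hz
      exact hψch'.2.2 a ha z (by simpa using (List.head?_cons ▸ hz : z ∈ some y'))⟩
  · show (pre ++ y' :: s2).head? = some (R c')
    rw [← head?_append_cons pre y' post s2, ← hψeq]
    exact hψh
  · intro x hx
    simp only [Finset.mem_union, List.mem_toFinset]
    rcases List.mem_append.mp hx with h' | h'
    · right; rw [hψeq]; exact List.mem_append_left _ h'
    · rcases List.mem_cons.mp h' with rfl | h''
      · right; rw [hψeq]; simp
      · left
        exact hsub x (by rw [hseq]; exact List.mem_append_right _ (List.mem_cons_of_mem _ h''))
  · exact Finset.subset_union_left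
  · exact le_max_left _ _
  · intro x hx
    have := hψmem x hx
    simpa using this

end SpineAux
namespace SpineAux
variable {V : Type*} [DecidableEq V] {D : V → V → Prop} {R : ℕ → V}

theorem exists_revray (hR : IsRay D R) (hSol : Solid D R) :
    ∃ R'' : ℕ → V, IsRevRay D R'' ∧
      DisjointPathsFrom D (Set.range R) (Set.range R'') ∧
      DisjointPathsFrom D (Set.range R'') (Set.range R) := by
  classical
  obtain ⟨-, hSol2⟩ := hSol
  choose comp hcomp1 hcomp2 using hSol2
  choose thr hthr using hcomp2
  -- initial state
  have hinit : Good D R thr (St.mk (thr ∅) [R (thr ∅)] ∅ {R (thr ∅)}) := by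
    refine ⟨by simp, by simp, List.isChain_singleton _, by simp, by simp, by simp, le_rfl⟩
  -- iterate the step
  let stf : ℕ → {s : St V // Good D R thr s} := fun n => Nat.rec
    ⟨St.mk (thr ∅) [R (thr ∅)] ∅ {R (thr ∅)}, hinit⟩
    (fun _ p => ⟨(step comp hcomp1 hthr p.1 p.2).choose,
      ((step comp hcomp1 hthr p.1 p.2).choose_spec).1⟩) n
  have hrel : ∀ k, Rel D R thr (stf k).1 (stf (k + 1)).1 :=
    fun k => ((step comp hcomp1 hthr (stf k).1 (stf k).2).choose_spec).2
  simp only [Rel] at hrel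
  choose hUprev0 hcnext ψf pref postf s1f s2f yf hψeq hseq hseq0 hU0 hψh0 hψl hψnd hψch
    hψav hpredisj using hrel
  -- re-state the choose results with `stf (k+1)` spelled explicitly (definitional)
  have hUprev : ∀ k, (stf (k + 1)).1.Uprev = (stf k).1.U := hUprev0
  have hseq' : ∀ k, (stf (k + 1)).1.seg = pref k ++ yf k :: s2f k := hseq0
  have hU : ∀ k, (stf (k + 1)).1.U = (stf k).1.U ∪ (ψf k).toFinset := hU0
  have hψh : ∀ k, (ψf k).head? = some (R ((stf (k + 1)).1.c)) := hψh0
  -- basic facts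
  have hGood : ∀ k, Good D R thr (stf k).1 := fun k => (stf k).2
  have hsegnd : ∀ k, (stf k).1.seg.Nodup := fun k => (hGood k).2.1
  have hsegch : ∀ k, (stf k).1.seg.Chain' D := fun k => (hGood k).2.2.1
  have hsegU : ∀ k, ∀ x ∈ (stf k).1.seg, x ∈ (stf k).1.U := fun k => (hGood k).2.2.2.2.1
  have hUmono : ∀ m n, m ≤ n → (stf m).1.U ⊆ (stf n).1.U := by
    intro m n hmn
    induction hmn with
    | refl => exact Finset.Subset.refl _
    | step h ih =>
      refine ih.trans ?_
      rw [hU]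
      exact Finset.subset_union_left
  -- the stable suffixes
  set T : ℕ → List V := fun k => yf k :: s2f k with hT
  have hTsufseg : ∀ k, (T k).IsSuffix (stf k).1.seg := fun k => ⟨s1f k, (hseq k).symm⟩
  have hTsufseg' : ∀ k, (T k).IsSuffix (stf (k + 1)).1.seg := fun k => ⟨pref k, (hseq' k).symm⟩
  have hTnd : ∀ k, (T k).Nodup := fun k => (hsegnd k).sublist (hTsufseg k).sublist
  have hTch : ∀ k, (T k).Chain' D := fun k => (hsegch k).suffix (hTsufseg k)
  have hymem : ∀ k, yf k ∈ ψf k := fun k => by rw [hψeq k]; simp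
  have hynext : ∀ k, yf (k + 1) ∈ pref k := by
    intro k
    have h1 : yf (k + 1) ∈ (stf (k + 1)).1.seg := by rw [hseq (k + 1)]; simp
    have h2 : yf (k + 1) ∉ (stf k).1.U := by
      have := hψav (k + 1) _ (hymem (k + 1))
      rwa [hUprev k] at this
    rw [hseq' k] at h1
    rcases List.mem_append.mp h1 with h' | h'
    · exact h'
    · exfalso
      rcases List.mem_cons.mp h' with h'' | h''
      · exact h2 (hsegU k _ (by rw [hseq k]; simp [h'']))
      · refine h2 (hsegU k _ ?_)
        rw [hseq k]
        exact List.mem_append_right _ (List.mem_cons_of_mem _ h'')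
  have hTstep : ∀ k, ∃ δ : List V, δ ≠ [] ∧ T (k + 1) = δ ++ T k := by
    intro k
    obtain ⟨α, β, hαβ⟩ := List.append_of_mem (hynext k)
    have e1 : (stf (k + 1)).1.seg = α ++ yf (k + 1) :: (β ++ yf k :: s2f k) := by
      rw [hseq' k, hαβ]; simp
    have e2 : (stf (k + 1)).1.seg = s1f (k + 1) ++ yf (k + 1) :: s2f (k + 1) := hseq (k + 1)
    have hnd := hsegnd (k + 1)
    rw [e1] at hnd
    have := nodup_unique_split α hnd (e1.symm.trans e2)
    refine ⟨yf (k + 1) :: β, by simp, ?_⟩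
    show yf (k + 1) :: s2f (k + 1) = (yf (k + 1) :: β) ++ (yf k :: s2f k)
    rw [← this]
    simp
  have hTlen : ∀ k, k < (T k).length := by
    intro k
    induction k with
    | zero => simp [hT]
    | succ k ih =>
      obtain ⟨δ, hδ, heq⟩ := hTstep k
      rw [heq, List.length_append]
      have : 1 ≤ δ.length := List.length_pos_iff.mpr hδ
      omega
  have hTchain : ∀ j k, j ≤ k → (T j).IsSuffix (T k) := by
    intro j k hjk
    induction hjk with
    | refl => exact List.suffix_refl _
    | step h ih =>
      obtain ⟨δ, -, heq⟩ := hTstep _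
      exact ih.trans ⟨δ, heq.symm⟩
  -- the reverse ray
  set R'' : ℕ → V := fun i => (T i).reverse.getD i (R 0) with hR''
  have hLget : ∀ k p, p < (T k).length → R'' p = (T k).reverse.getD p (R 0) := by
    intro k p hp
    have hRp : R'' p = (T p).reverse.getD p (R 0) := by rw [hR'']
    rcases le_total k p with h' | h'
    · exact hRp.trans (getD_reverse_agree (hTchain k p h') hp _)
    · exact hRp.trans (getD_reverse_agree (hTchain p k h') (hTlen p) _).symm
  have hRmem : ∀ k p, p < (T k).length → R'' p ∈ T k := by
    intro k p hp
    rw [hLget k p hp]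
    exact getD_reverse_mem hp _
  have hPmem : ∀ k, ∀ x ∈ T k, x ∈ Set.range R'' := by
    intro k x hx
    obtain ⟨p, hp, hget⟩ := mem_exists_getD_reverse (d := R 0) hx
    exact ⟨p, by rw [hLget k p hp]; exact hget⟩
  have hRevRay : IsRevRay D R'' := by
    constructor
    · intro i j hij
      by_contra hne
      rcases Nat.lt_or_ge i j with h' | h'
      · have hi : i < (T j).length := h'.trans (hTlen j)
        rw [hLget j i hi] at hij
        exact getD_reverse_inj (hTnd j) hi (hTlen j) (by omega) _ hij
      · have h'' : j < i := by omega
        have hj : j < (T i).length := h''.trans (hTlen i)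
        rw [hLget i j hj] at hij
        exact getD_reverse_inj (hTnd i) (hTlen i) hj (by omega) _ hij
    · intro n
      have h1 : n + 1 < (T (n + 1)).length := hTlen (n + 1)
      have h0 : n < (T (n + 1)).length := by omega
      rw [hLget (n + 1) (n + 1) h1, hLget (n + 1) n h0]
      exact chain'_reverse_getD (hTch (n + 1)) h1 _
  -- disjointness of the pieces
  have hψU : ∀ j, ∀ x ∈ ψf j, x ∈ (stf (j + 1)).1.U := by
    intro j x hx
    rw [hU j]
    exact Finset.mem_union_right _ (List.mem_toFinset.mpr hx)
  have hψdisj : ∀ j k, j + 2 ≤ k → ∀ x ∈ ψf j, x ∉ ψf k := by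
    intro j k hjk x hxj hxk
    have h1 : x ∈ (stf (k - 1)).1.U := hUmono (j + 1) (k - 1) (by omega) (hψU j x hxj)
    have h2 := hψav k x hxk
    have e : k - 1 + 1 = k := by omega
    rw [← e, hUprev (k - 1)] at h2
    exact h2 h1
  have hyR'' : ∀ k, yf k ∈ Set.range R'' := fun k => hPmem k _ (by simp [hT])
  -- family 1 : range R → range R''
  have hcand1 : ∀ r, ∃ l : List V, IsPathList D l ∧
      (∃ a, l.head? = some a ∧ a ∈ Set.range R) ∧
      (∃ b, l.getLast? = some b ∧ b ∈ Set.range R'') ∧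
      (∀ x ∈ l.tail, x ∉ Set.range R) ∧ (∀ x ∈ l.dropLast, x ∉ Set.range R'') ∧
      (∀ x ∈ l, x ∈ ψf r) := by
    intro r
    obtain ⟨L1, q, L2, hsplit, hq, hL1⟩ :=
      first_split (P := fun t => t ∈ Set.range R'') (ψf r) ⟨yf r, hymem r, hyR'' r⟩
    have hpre2 : (L1 ++ [q]).IsPrefix (ψf r) := ⟨L2, by rw [hsplit]; simp⟩
    have hP : IsPathList D (L1 ++ [q]) :=
      ⟨by simp, (hψnd r).sublist hpre2.sublist, (hψch r).prefix hpre2⟩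
    have hhead : (L1 ++ [q]).head? = some (R ((stf (r + 1)).1.c)) := by
      rw [head?_append_cons L1 q [] L2, ← hsplit]
      exact hψh r
    obtain ⟨l', hP', ⟨a', hh', ha'⟩, hl', htail', hmem', hsub'⟩ :=
      trimA (A := Set.range R) (S := {x | x ∈ ψf r}) (L1 ++ [q]) hP hhead
        (Set.mem_range_self _) (List.getLast?_concat)
        (fun x hx => hpre2.sublist.mem hx)
    refine ⟨l', hP', ⟨a', hh', ha'⟩, ⟨q, hl', hq⟩, htail', ?_, hmem'⟩
    intro x hx
    have hxl' : x ∈ l' := (List.dropLast_sublist l').mem hx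
    have hxl : x ∈ L1 ++ [q] := hsub'.mem hxl'
    rcases List.mem_append.mp hxl with h' | h'
    · exact hL1 x h'
    · exfalso
      simp only [List.mem_singleton] at h'
      subst h'
      exact not_mem_dropLast_getLast hP'.2.1 hl' hx
  -- family 2 : range R'' → range R
  have hcand2 : ∀ r, ∃ l : List V, IsPathList D l ∧
      (∃ a, l.head? = some a ∧ a ∈ Set.range R'') ∧
      (∃ b, l.getLast? = some b ∧ b ∈ Set.range R) ∧
      (∀ x ∈ l.tail, x ∉ Set.range R'') ∧ (∀ x ∈ l.dropLast, x ∉ Set.range R) ∧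
      (∀ x ∈ l, x ∈ ψf r) := by
    intro r
    obtain ⟨μ₁, p, μ₂, hsplit, hp, hμ₂⟩ :=
      last_split (P := fun t => t ∈ Set.range R'') (ψf r) ⟨yf r, hymem r, hyR'' r⟩
    have hsuf : (p :: μ₂).IsSuffix (ψf r) := ⟨μ₁, by rw [hsplit]⟩
    have hlast : (p :: μ₂).getLast? = some (R ((stf r).1.c)) := by
      have := hψl r
      rw [hsplit, List.getLast?_append_of_ne_nil _ (by simp)] at this
      exact this
    obtain ⟨ν₁, z, ν₂, hsplit2, hz, hν₁⟩ :=
      first_split (P := fun t => t ∈ Set.range R) (p :: μ₂)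
        ⟨R ((stf r).1.c), mem_of_getLast?_eq hlast, Set.mem_range_self _⟩
    have hpre2 : (ν₁ ++ [z]).IsPrefix (p :: μ₂) := ⟨ν₂, by rw [hsplit2]; simp⟩
    have hP : IsPathList D (ν₁ ++ [z]) :=
      ⟨by simp, ((hψnd r).sublist hsuf.sublist).sublist hpre2.sublist,
        ((hψch r).suffix hsuf).prefix hpre2⟩
    refine ⟨ν₁ ++ [z], hP, ⟨p, ?_, hp⟩, ⟨z, List.getLast?_concat, hz⟩, ?_, ?_, ?_⟩
    · rw [head?_append_cons ν₁ z [] ν₂, ← hsplit2]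
      simp
    · intro x hx
      have hxμ₂ : x ∈ μ₂ := by
        cases ν₁ with
        | nil =>
          simp only [List.nil_append, List.tail_cons] at hx
          simp at hx
        | cons w ν₁' =>
          simp only [List.cons_append, List.tail_cons] at hx
          have : x ∈ ν₁' ++ z :: ν₂ := by
            rcases List.mem_append.mp hx with h' | h'
            · exact List.mem_append_left _ h'
            · simp only [List.mem_singleton] at h'
              subst h'
              exact List.mem_append_right _ (by simp)
          have he : p :: μ₂ = w :: (ν₁' ++ z :: ν₂) := by rw [hsplit2]; simp
          have : x ∈ μ₂ := by
            have := List.cons.injEq p μ₂ w _ ▸ he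
            rw [List.cons.injEq] at he
            rw [he.2]
            exact ‹x ∈ ν₁' ++ z :: ν₂›
          exact this
      exact fun hxR => hμ₂ x hxμ₂ hxR
    · intro x hx
      rw [List.dropLast_concat] at hx
      exact hν₁ x hx
    · intro x hx
      exact hsuf.sublist.mem (hpre2.sublist.mem hx)
  choose c1 hc1P hc1h hc1l hc1t hc1d hc1m using hcand1
  choose c2 hc2P hc2h hc2l hc2t hc2d hc2m using hcand2
  refine ⟨R'', hRevRay, ?_, ?_⟩
  · refine ⟨fun m => c1 (2 * m), fun m => hc1P _, ?_, fun m => hc1h _, fun m => hc1l _,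
      fun m => hc1t _, fun m => hc1d _⟩
    intro j k hjk x hxj hxk
    have hj := hc1m (2 * j) x hxj
    have hk := hc1m (2 * k) x hxk
    rcases Nat.lt_or_ge j k with h' | h'
    · exact hψdisj (2 * j) (2 * k) (by omega) x hj hk
    · have h'' : k < j := by omega
      exact hψdisj (2 * k) (2 * j) (by omega) x hk hj
  · refine ⟨fun m => c2 (2 * m), fun m => hc2P _, ?_, fun m => hc2h _, fun m => hc2l _,
      fun m => hc2t _, fun m => hc2d _⟩
    intro j k hjk x hxj hxk
    have hj := hc2m (2 * j) x hxj
    have hk := hc2m (2 * k) x hxk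
    rcases Nat.lt_or_ge j k with h' | h'
    · exact hψdisj (2 * j) (2 * k) (by omega) x hj hk
    · have h'' : k < j := by omega
      exact hψdisj (2 * k) (2 * j) (by omega) x hk hj

end SpineAux
section Assembly
variable {V : Type*}

theorem endEquiv_refl {D : V → V → Prop} {R : ℕ → V} (hSol : Solid D R) :
    EndEquiv D R R := by
  intro X
  obtain ⟨C, h1, h2⟩ := hSol.2 X
  exact ⟨C, h1, h2, h2⟩

end Assembly

/-- A pre-end `γ` includes an end iff it is represented both by a ray and a reverse ray;
moreover the included end is unique. -/
theorem preend_includes_end_iff (D : V → V → Prop) (Q₀ : Bool × (ℕ → V))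
    (hQ₀ : IsGenRay D Q₀) (γ : Set (Bool × (ℕ → V)))
    (hγ : γ = {Q | IsGenRay D Q ∧ PreEquiv D Q₀ Q}) :
    ((∃ R, IncludesEnd D γ R) ↔ ((∃ R, (true, R) ∈ γ) ∧ ∃ R, (false, R) ∈ γ)) ∧
    (∀ R R', IncludesEnd D γ R → IncludesEnd D γ R' → EndEquiv D R R') := by
  classical
  subst hγ
  obtain ⟨b, Q⟩ := Q₀
  have hQinj : Function.Injective Q := genray_inj hQ₀
  constructor
  · constructor
    · rintro ⟨R, hSolR, hInc⟩
      have hRay : IsRay D R := hSolR.1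
      have hmemR : (true, R) ∈ {Q' | IsGenRay D Q' ∧ PreEquiv D (b, Q) Q'} :=
        hInc R hSolR (endEquiv_refl hSolR)
      refine ⟨⟨R, hmemR⟩, ?_⟩
      obtain ⟨-, hPre⟩ := hmemR
      obtain ⟨F2, F1⟩ := hPre
      obtain ⟨R'', hRev, HF1, HF2⟩ := SpineAux.exists_revray hRay hSolR
      refine ⟨R'', ?_, ?_, ?_⟩
      · exact (hRev : IsGenRay D (false, R''))
      · exact comp_dpf hRay hQinj hRev.1 F2 HF1
      · exact comp_dpf hRay hRev.1 hQinj HF2 F1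
    · rintro ⟨⟨Rt, hmemT⟩, ⟨Rf, hmemF⟩⟩
      obtain ⟨hgT, F2, F1⟩ := hmemT
      obtain ⟨hgF, G2, G1⟩ := hmemF
      have hRayT : IsRay D Rt := hgT
      have hRevF : IsRevRay D Rf := hgF
      have hSol : Solid D Rt := solid_of_sandwich hQ₀ hRayT hRevF F1 F2 G1 G2
      refine ⟨Rt, hSol, ?_⟩
      intro R₂ hSol₂ hEq
      obtain ⟨D1, D2⟩ := preequiv_transfer hQ₀ hRayT F1 F2 hEq
      exact ⟨(hSol₂.1 : IsRay D R₂), D1, D2⟩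
  · rintro R R' ⟨hSolR, hIncR⟩ ⟨hSolR', hIncR'⟩
    have hmemR := hIncR R hSolR (endEquiv_refl hSolR)
    have hmemR' := hIncR' R' hSolR' (endEquiv_refl hSolR')
    obtain ⟨-, P2, P1⟩ := hmemR
    obtain ⟨-, H2, H1⟩ := hmemR'
    exact endEquiv_of_preequiv hQ₀ hSolR.1 hSolR'.1 hSolR P1 P2 H1 H2
end
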